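/- arXiv:2506.05632 — 7 statements merged into one kernel-verified Lean document; each statement's English description precedes it below -/
import Mathlib

section
/- List matching lemma, unconditional form: under Gumbel-max list sampling, the matching probability satisfies Pr[Y ∈ {X^(1), …, X^(K)}] ≥ Σ_{j=1}^{N} K / ( Σ_{i=1}^{N} [ max{ q_i/q_j , p_i/p_j } + (K − 1)·q_i/q_j ] ). (Theorem 1, equation (3).) -/
open MeasureTheory ProbabilityTheory Real Set
open scoped ENNReal

namespace ListMatchingAux

lemma expMeasure_apply' (r : ℝ) {s : Set ℝ} (hs : MeasurableSet s) :
    expMeasure r s = ∫⁻ x in s, exponentialPDF r x := by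
  rw [expMeasure, gammaMeasure, withDensity_apply _ hs]; rfl

lemma expMeasure_Iio_zero (r : ℝ) : expMeasure r (Iio 0) = 0 := by
  rw [expMeasure_apply' r measurableSet_Iio]
  exact lintegral_exponentialPDF_of_nonpos le_rfl

lemma expMeasure_Ioi {r a : ℝ} (hr : 0 < r) (ha : 0 ≤ a) :
    expMeasure r (Ioi a) = ENNReal.ofReal (exp (-(r * a))) := by
  haveI := isProbabilityMeasure_expMeasure hr
  have h1 : expMeasure r (Iic a) = ENNReal.ofReal (1 - exp (-(r * a))) := by
    rw [expMeasure_apply' r measurableSet_Iic, lintegral_exponentialPDF_eq_antiDeriv hr,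
      if_pos ha]
  have h2 : Ioi a = (Iic a)ᶜ := by simp
  rw [h2, measure_compl measurableSet_Iic (measure_ne_top _ _), measure_univ, h1]
  have he1 : exp (-(r * a)) ≤ 1 := exp_le_one_iff.mpr (by nlinarith)
  rw [ENNReal.ofReal_sub _ (exp_pos _).le, ENNReal.ofReal_one,
    ENNReal.sub_sub_cancel ENNReal.one_ne_top (ENNReal.ofReal_le_one.mpr he1)]

lemma expMeasure_Ioi_one (a : ℝ) :
    expMeasure 1 (Ioi a) = ENNReal.ofReal (exp (-(max a 0))) := by
  haveI := isProbabilityMeasure_expMeasure one_pos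
  rcases le_or_gt 0 a with ha | ha
  · rw [max_eq_left ha, expMeasure_Ioi one_pos ha, one_mul]
  · rw [max_eq_right ha.le]
    refine le_antisymm (by simpa using prob_le_one) ?_
    have : expMeasure 1 (Ioi (0:ℝ)) ≤ expMeasure 1 (Ioi a) :=
      measure_mono (Ioi_subset_Ioi ha.le)
    rw [expMeasure_Ioi one_pos le_rfl] at this
    simpa using this

lemma lintegral_exp_neg_expMeasure {C : ℝ} (hC : 0 ≤ C) :
    ∫⁻ t, ENNReal.ofReal (exp (-(C * t))) ∂(expMeasure 1)
      = ENNReal.ofReal (1 / (1 + C)) := by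
  have hC1 : (0:ℝ) < 1 + C := by linarith
  have hm : Measurable (gammaPDF 1 1) := ENNReal.measurable_ofReal.comp (measurable_gammaPDFReal 1 1)
  rw [expMeasure, gammaMeasure,
    lintegral_withDensity_eq_lintegral_mul _ hm
      ((by fun_prop : Measurable fun t : ℝ => ENNReal.ofReal (exp (-(C * t)))))]
  have hpt : ∀ t, (gammaPDF 1 1 * fun t => ENNReal.ofReal (exp (-(C * t)))) t
      = ENNReal.ofReal (1 / (1 + C)) * exponentialPDF (1 + C) t := by
    intro t
    simp only [Pi.mul_apply]
    have : gammaPDF 1 1 t = exponentialPDF 1 t := rfl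
    rw [this, exponentialPDF_eq, exponentialPDF_eq]
    rcases le_or_gt 0 t with ht | ht
    · rw [if_pos ht, if_pos ht, ← ENNReal.ofReal_mul (by positivity),
        ← ENNReal.ofReal_mul (by positivity)]
      congr 1
      have h2 : 1 / (1 + C) * ((1 + C) * rexp (-((1 + C) * t))) = rexp (-((1+C)*t)) := by
        field_simp
      rw [h2, one_mul, ← exp_add]
      ring_nf
    · rw [if_neg (not_le.mpr ht), if_neg (not_le.mpr ht)]
      simp
  simp only [hpt]
  have hm2 : Measurable (exponentialPDF (1 + C)) :=
    ENNReal.measurable_ofReal.comp (measurable_exponentialPDFReal _)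
  rw [lintegral_const_mul _ hm2, lintegral_exponentialPDF_eq_one hC1, mul_one]

lemma pi_measure_win {ι : Type*} [Fintype ι] [DecidableEq ι] (m0 : ι) (c : ι → ℝ)
    (hc : ∀ m, 0 ≤ c m) :
    Measure.pi (fun _ : ι => expMeasure 1) {x | ∀ m, m ≠ m0 → c m * x m0 < x m}
      = ENNReal.ofReal (1 / (1 + ∑ m : {m : ι // m ≠ m0}, c m.1)) := by
  haveI : IsProbabilityMeasure (expMeasure 1) := isProbabilityMeasure_expMeasure one_pos
  set C : ℝ := ∑ m : {m : ι // m ≠ m0}, c m.1 with hCdef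
  have hC : 0 ≤ C := Finset.sum_nonneg fun m _ => hc m.1
  set P : ι → Prop := fun m => m = m0 with hP
  letI : DecidablePred P := fun m => decEq m m0
  letI hu : Unique {m : ι // P m} := ⟨⟨⟨m0, rfl⟩⟩, fun a => Subtype.ext a.2⟩
  set e := MeasurableEquiv.piEquivPiSubtypeProd (fun _ : ι => ℝ) P with he
  have hmp := measurePreserving_piEquivPiSubtypeProd (fun _ : ι => expMeasure 1) P
  set B : Set (({m : ι // P m} → ℝ) × ({m : ι // ¬ P m} → ℝ)) :=
    {z | ∀ m : {m : ι // ¬ P m}, c m.1 * z.1 default < z.2 m} with hB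
  have hBmeas : MeasurableSet B := by
    have : B = ⋂ m : {m : ι // ¬ P m}, {z : ({m : ι // P m} → ℝ) × ({m : ι // ¬ P m} → ℝ) |
        c m.1 * z.1 default < z.2 m} := by
      ext z; simp [hB]
    rw [this]
    refine MeasurableSet.iInter fun m => measurableSet_lt ?_ ?_
    · exact (measurable_const.mul ((measurable_pi_apply _).comp measurable_fst))
    · exact (measurable_pi_apply _).comp measurable_snd
  have hpre : e ⁻¹' B = {x | ∀ m, m ≠ m0 → c m * x m0 < x m} := by
    ext x
    simp only [he, hB, MeasurableEquiv.piEquivPiSubtypeProd, Equiv.piEquivPiSubtypeProd,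
      MeasurableEquiv.coe_mk, Equiv.coe_fn_mk, mem_preimage, mem_setOf_eq]
    constructor
    · intro h m hm
      exact h ⟨m, hm⟩
    · rintro h ⟨m, hm⟩
      exact h m hm
  rw [← hpre, hmp.measure_preimage hBmeas.nullMeasurableSet]
  rw [Measure.prod_apply hBmeas]
  have hslice : ∀ a : {m : ι // P m} → ℝ,
      (Measure.pi fun _ : {m : ι // ¬ P m} => expMeasure 1) (Prod.mk a ⁻¹' B)
        = ∏ m : {m : ι // ¬ P m}, ENNReal.ofReal (exp (-(max (c m.1 * a default) 0))) := by
    intro a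
    have : Prod.mk a ⁻¹' B = Set.pi univ (fun m : {m : ι // ¬ P m} =>
        Ioi (c m.1 * a default)) := by
      ext y; simp [hB, Set.mem_pi]
    rw [this, Measure.pi_pi]
    exact Finset.prod_congr rfl fun m _ => expMeasure_Ioi_one _
  simp only [hslice]
  -- push through funUnique
  have hfu := measurePreserving_funUnique (expMeasure 1) {m : ι // P m}
  set F : ℝ → ℝ≥0∞ := fun t => ∏ m : {m : ι // ¬ P m},
    ENNReal.ofReal (exp (-(max (c m.1 * t) 0))) with hF
  have hFmeas : Measurable F := by
    refine Finset.measurable_prod _ fun m _ => ?_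
    exact ENNReal.measurable_ofReal.comp (by fun_prop)
  trans (∫⁻ t, F t ∂(expMeasure 1))
  · have h2 := hfu.lintegral_comp hFmeas
    convert h2 using 2
    congr!
    rfl
  have hae : ∀ᵐ t ∂(expMeasure 1), F t = ENNReal.ofReal (exp (-(C * t))) := by
    have h0 : ∀ᵐ t ∂(expMeasure 1), 0 ≤ t := by
      rw [ae_iff]
      have : {t : ℝ | ¬ 0 ≤ t} = Iio 0 := by ext t; simp
      rw [this]; exact expMeasure_Iio_zero 1
    filter_upwards [h0] with t ht
    rw [hF]
    have : ∀ m : {m : ι // ¬ P m}, max (c m.1 * t) 0 = c m.1 * t := fun m =>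
      max_eq_left (mul_nonneg (hc m.1) ht)
    simp only [this]
    rw [← ENNReal.ofReal_prod_of_nonneg (fun m _ => (exp_pos _).le), ← Real.exp_sum]
    congr 2
    rw [hCdef, Finset.sum_mul]
    simp [neg_mul]
    rfl
  rw [lintegral_congr_ae hae, lintegral_exp_neg_expMeasure hC]

lemma map_eq_pi {Ω : Type*} [MeasurableSpace Ω] (μ : Measure Ω) [IsProbabilityMeasure μ]
    {ι : Type*} [Fintype ι] (f : ι → Ω → ℝ) (hmeas : ∀ i, Measurable (f i))
    (hind : iIndepFun f μ)
    (hmap : ∀ i, μ.map (f i) = expMeasure 1) :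
    μ.map (fun ω i => f i ω) = Measure.pi (fun _ : ι => expMeasure 1) := by
  haveI : IsProbabilityMeasure (expMeasure 1) := isProbabilityMeasure_expMeasure one_pos
  refine (Measure.pi_eq (μ := fun _ : ι => expMeasure 1) fun s hs => ?_).symm
  rw [Measure.map_apply (measurable_pi_lambda _ fun i => hmeas i)
    (MeasurableSet.univ_pi hs)]
  have hpre : (fun ω i => f i ω) ⁻¹' (Set.pi univ s) = ⋂ i ∈ Finset.univ, f i ⁻¹' s i := by
    ext ω; simp [Set.mem_pi]
  rw [hpre, hind.measure_inter_preimage_eq_mul Finset.univ (fun i _ => hs i)]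
  refine Finset.prod_congr rfl fun i _ => ?_
  rw [← Measure.map_apply (hmeas i) (hs i), hmap i]

end ListMatchingAux

open ListMatchingAux

/-- **List matching lemma, unconditional form (Theorem 1, eq. (3)).**
Under Gumbel-max list sampling,
`Pr[Y ∈ {X 1, …, X K}] ≥ ∑ j, K / ∑ i (max (q i / q j) (p i / p j) + (K-1) * q i / q j)`. -/
theorem list_matching_lemma
    {Ω : Type*} [MeasurableSpace Ω] (μ : Measure Ω) [IsProbabilityMeasure μ]
    (N K : ℕ) (hN : 0 < N) (hK : 0 < K)
    (p q : Fin N → ℝ) (hp : ∀ i, 0 < p i) (hq : ∀ i, 0 < q i)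
    (hpsum : ∑ i, p i = 1) (hqsum : ∑ i, q i = 1)
    (S : Fin N → Fin K → Ω → ℝ) (hSmeas : ∀ i k, Measurable (S i k))
    (hSindep : iIndepFun
      (fun ik : Fin N × Fin K => S ik.1 ik.2) μ)
    (hSexp : ∀ i k, μ.map (S i k) = expMeasure 1)
    (Y : Ω → Fin N) (hYmeas : Measurable Y)
    (X : Fin K → Ω → Fin N) (hXmeas : ∀ k, Measurable (X k))
    -- `Y` is a.s. the unique argmin of `i ↦ (min_k S i k) / q i`
    (hY : ∀ᵐ ω ∂μ, ∀ i : Fin N, i ≠ Y ω →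
      (⨅ k : Fin K, S (Y ω) k ω) / q (Y ω) < (⨅ k : Fin K, S i k ω) / q i)
    -- each `X k` is a.s. the unique argmin of `i ↦ S i k / p i`
    (hX : ∀ᵐ ω ∂μ, ∀ k : Fin K, ∀ i : Fin N, i ≠ X k ω →
      S (X k ω) k ω / p (X k ω) < S i k ω / p i)
    : ENNReal.ofReal (∑ j : Fin N, (K : ℝ) /
        ∑ i : Fin N, (max (q i / q j) (p i / p j) + ((K : ℝ) - 1) * (q i / q j)))
      ≤ μ {ω | ∃ k : Fin K, X k ω = Y ω} := by
  haveI : IsProbabilityMeasure (expMeasure 1) := isProbabilityMeasure_expMeasure one_pos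
  haveI : Nonempty (Fin N) := ⟨⟨0, hN⟩⟩
  haveI : Nonempty (Fin K) := ⟨⟨0, hK⟩⟩
  set ν := Measure.pi (fun _ : Fin N × Fin K => expMeasure 1) with hν
  set V : Ω → (Fin N × Fin K → ℝ) := fun ω m => S m.1 m.2 ω with hV
  have hVmeas : Measurable V := measurable_pi_lambda _ fun m => hSmeas m.1 m.2
  have hmap : μ.map V = ν :=
    map_eq_pi μ _ (fun m => hSmeas m.1 m.2) hSindep (fun m => hSexp m.1 m.2)
  -- coefficients
  set c : Fin N × Fin K → Fin N × Fin K → ℝ := fun m0 m =>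
    if m.2 = m0.2 then max (q m.1 / q m0.1) (p m.1 / p m0.1) else q m.1 / q m0.1 with hc
  have hcnn : ∀ m0 m, 0 ≤ c m0 m := by
    intro m0 m
    simp only [hc]
    split
    · exact le_trans (div_pos (hq _) (hq _)).le (le_max_left _ _)
    · exact (div_pos (hq _) (hq _)).le
  have hclb : ∀ m0 m, q m.1 / q m0.1 ≤ c m0 m := by
    intro m0 m
    simp only [hc]
    split
    · exact le_max_left _ _
    · exact le_rfl
  have hc1 : ∀ m0, c m0 m0 = 1 := by
    intro m0
    simp only [hc, if_pos rfl, div_self (hq m0.1).ne', div_self (hp m0.1).ne', max_self]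
  -- denominators
  set D : Fin N → ℝ := fun j =>
    ∑ i, (max (q i / q j) (p i / p j) + ((K : ℝ) - 1) * (q i / q j)) with hD
  have hK1 : (1:ℝ) ≤ (K:ℝ) := by exact_mod_cast hK
  have hD0 : ∀ j, 0 < D j := by
    intro j
    refine Finset.sum_pos (fun i _ => ?_) Finset.univ_nonempty
    have h1 : 0 < max (q i / q j) (p i / p j) :=
      lt_of_lt_of_le (div_pos (hq i) (hq j)) (le_max_left _ _)
    have h2 : 0 ≤ ((K:ℝ) - 1) * (q i / q j) :=
      mul_nonneg (by linarith) (div_pos (hq i) (hq j)).le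
    linarith
  have hsum : ∀ m0 : Fin N × Fin K, ∑ m : Fin N × Fin K, c m0 m = D m0.1 := by
    intro m0
    rw [Fintype.sum_prod_type]
    refine Finset.sum_congr rfl fun i _ => ?_
    rw [← Finset.add_sum_erase _ _ (Finset.mem_univ m0.2)]
    congr 1
    · simp only [hc, if_pos rfl]
    · rw [Finset.sum_congr rfl (fun κ hκ => ?_), Finset.sum_const,
        Finset.card_erase_of_mem (Finset.mem_univ _), Finset.card_univ, Fintype.card_fin,
        nsmul_eq_mul, Nat.cast_sub hK, Nat.cast_one]
      simp only [hc, if_neg (Finset.mem_erase.mp hκ).1]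
  -- sets
  set Pos : Set (Fin N × Fin K → ℝ) := {x | ∀ m, 0 < x m} with hPos
  set A : Fin N × Fin K → Set (Fin N × Fin K → ℝ) := fun m0 =>
    {x | ∀ m, m ≠ m0 → c m0 m * x m0 < x m} with hA
  have hPosmeas : MeasurableSet Pos := by
    have : Pos = ⋂ m, {x : Fin N × Fin K → ℝ | 0 < x m} := by ext x; simp [hPos]
    rw [this]
    exact MeasurableSet.iInter fun m =>
      measurableSet_lt measurable_const (measurable_pi_apply m)
  have hAmeas : ∀ m0, MeasurableSet (A m0) := by
    intro m0
    have : A m0 = ⋂ m, {x : Fin N × Fin K → ℝ | m ≠ m0 → c m0 m * x m0 < x m} := by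
      ext x; simp [hA]
    rw [this]
    refine MeasurableSet.iInter fun m => ?_
    by_cases hm : m = m0
    · simp [hm]
    · simp only [hm, ne_eq, not_false_iff, true_implies]
      exact measurableSet_lt (measurable_const.mul (measurable_pi_apply m0))
        (measurable_pi_apply m)
  have hPosfull : ν Posᶜ = 0 := by
    have hcompl : Posᶜ = ⋃ m, {x : Fin N × Fin K → ℝ | x m ≤ 0} := by
      ext x; simp [hPos, not_lt]
    rw [hcompl]
    refine measure_iUnion_null fun m => ?_
    have hbox : {x : Fin N × Fin K → ℝ | x m ≤ 0}
        = Set.pi univ (fun m' => if m' = m then Iic 0 else univ) := by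
      ext x
      simp only [Set.mem_pi, mem_univ, true_implies, mem_setOf_eq]
      constructor
      · intro h m'; split <;> rename_i h' <;> simp_all
      · intro h; have := h m; simpa using this
    rw [hν, hbox, Measure.pi_pi]
    refine Finset.prod_eq_zero (Finset.mem_univ m) ?_
    rw [if_pos rfl]
    have : expMeasure 1 (Iic (0:ℝ)) = 0 := by
      rw [expMeasure_apply' 1 measurableSet_Iic,
        lintegral_exponentialPDF_eq_antiDeriv one_pos]
      norm_num
    exact this
  -- key pointwise inequality
  have hkey : ∀ m0 : Fin N × Fin K, ∀ x : Fin N × Fin K → ℝ, x ∈ A m0 → 0 < x m0 →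
      ∀ m, m ≠ m0 → x m0 / q m0.1 < x m / q m.1 := by
    intro m0 x hxA hx0 m hm
    have h1 : c m0 m * x m0 < x m := hxA m hm
    have h2 : q m.1 / q m0.1 * x m0 ≤ c m0 m * x m0 :=
      mul_le_mul_of_nonneg_right (hclb m0 m) hx0.le
    rw [div_lt_div_iff₀ (hq m0.1) (hq m.1)]
    have h3 : q m.1 / q m0.1 * x m0 < x m := lt_of_le_of_lt h2 h1
    rw [div_mul_eq_mul_div, div_lt_iff₀ (hq m0.1)] at h3
    linarith [h3, mul_comm (x m0) (q m.1)]
  -- disjointness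
  have hdisj : Pairwise (Function.onFun Disjoint fun m0 => A m0 ∩ Pos) := by
    intro m0 m1 hne
    rw [Function.onFun, Set.disjoint_left]
    rintro x ⟨hx0, hxP⟩ ⟨hx1, _⟩
    have t01 := hkey m0 x hx0 (hxP m0) m1 hne.symm
    have t10 := hkey m1 x hx1 (hxP m1) m0 hne
    linarith
  -- measure of the union
  set T : Set (Fin N × Fin K → ℝ) := ⋃ m0, (A m0 ∩ Pos) with hT
  have hTmeas : MeasurableSet T :=
    MeasurableSet.iUnion fun m0 => (hAmeas m0).inter hPosmeas
  have hνT : ν T = ∑ m0 : Fin N × Fin K, ENNReal.ofReal (1 / D m0.1) := by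
    rw [hT, measure_iUnion hdisj (fun m0 => (hAmeas m0).inter hPosmeas), tsum_fintype]
    refine Finset.sum_congr rfl fun m0 _ => ?_
    rw [measure_inter_conull hPosfull]
    have := pi_measure_win m0 (c m0) (hcnn m0)
    rw [hν, hA]
    rw [this]
    congr 1
    have hsub : ∑ m : {m : Fin N × Fin K // m ≠ m0}, c m0 m.1 = D m0.1 - 1 := by
      rw [← Finset.sum_subtype (Finset.univ.erase m0)
        (fun x => by simp [Finset.mem_erase]) (c m0),
        Finset.sum_erase_eq_sub (Finset.mem_univ m0), hsum m0, hc1 m0]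
    rw [hsub]
    congr 1
    ring
  -- the event implication
  have himp : ∀ᵐ ω ∂μ, ω ∈ V ⁻¹' T → ω ∈ {ω | ∃ k : Fin K, X k ω = Y ω} := by
    filter_upwards [hY, hX] with ω hYω hXω hVT
    obtain ⟨m0, hm0⟩ := mem_iUnion.mp hVT
    obtain ⟨hxA, hxP⟩ := hm0
    set j := m0.1
    set k := m0.2
    have hm0jk : m0 = (j, k) := rfl
    -- X k ω = j
    have hXk : X k ω = j := by
      by_contra hXk'
      have h1 := hXω k j (fun h => hXk' h.symm)
      have h2 : V ω m0 / p j < V ω (X k ω, k) / p (X k ω) := by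
        have hc2 : p (X k ω) / p j ≤ c m0 (X k ω, k) := by
          simp only [hc, if_pos rfl]
          rw [if_pos rfl]
          exact le_max_right _ _
        have h3 : c m0 (X k ω, k) * V ω m0 < V ω (X k ω, k) :=
          hxA (X k ω, k) (by
            intro h
            exact hXk' (congrArg Prod.fst h))
        have h4 : p (X k ω) / p j * V ω m0 ≤ c m0 (X k ω, k) * V ω m0 :=
          mul_le_mul_of_nonneg_right hc2 (hxP m0).le
        have h5 : p (X k ω) / p j * V ω m0 < V ω (X k ω, k) := lt_of_le_of_lt h4 h3
        rw [div_lt_div_iff₀ (hp j) (hp (X k ω))]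
        rw [div_mul_eq_mul_div, div_lt_iff₀ (hp j)] at h5
        linarith [h5, mul_comm (V ω m0) (p (X k ω))]
      have he1 : V ω m0 = S j k ω := rfl
      have he2 : V ω (X k ω, k) = S (X k ω) k ω := rfl
      rw [he1, he2] at h2
      linarith
    -- Y ω = j
    have hYj : Y ω = j := by
      by_contra hY'
      have h1 := hYω j (fun h => hY' h.symm)
      -- show (⨅ κ, S j κ ω)/q j < (⨅ κ, S (Y ω) κ ω)/q (Y ω)
      have hb : ∀ i : Fin N, i ≠ j →
          (⨅ κ : Fin K, S j κ ω) / q j < (⨅ κ : Fin K, S i κ ω) / q i := by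
        intro i hi
        obtain ⟨κ0, _, hκ0⟩ := Finset.exists_min_image Finset.univ
          (fun κ => S i κ ω) ⟨k, Finset.mem_univ k⟩
        have hinf_i : (⨅ κ : Fin K, S i κ ω) = S i κ0 ω :=
          le_antisymm (ciInf_le (Set.finite_range _).bddBelow κ0)
            (le_ciInf fun κ => hκ0 κ (Finset.mem_univ κ))
        have hinf_j : (⨅ κ : Fin K, S j κ ω) ≤ S j k ω :=
          ciInf_le (Set.finite_range _).bddBelow k
        have hlt : V ω m0 / q j < V ω (i, κ0) / q i :=
          hkey m0 (V ω) hxA (hxP m0) (i, κ0) (by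
            intro h
            exact hi (congrArg Prod.fst h))
        have he1 : V ω m0 = S j k ω := rfl
        have he2 : V ω (i, κ0) = S i κ0 ω := rfl
        rw [he1, he2] at hlt
        rw [hinf_i]
        calc (⨅ κ : Fin K, S j κ ω) / q j ≤ S j k ω / q j := by gcongr <;> exact (hq j).le
          _ < S i κ0 ω / q i := hlt
      have h2 := hb (Y ω) hY'
      linarith
    exact ⟨k, by rw [hXk, hYj]⟩
  have hle : μ (V ⁻¹' T) ≤ μ {ω | ∃ k : Fin K, X k ω = Y ω} := by
    refine measure_mono_ae ?_
    exact himp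
  have hμT : μ (V ⁻¹' T) = ν T := by
    rw [← Measure.map_apply hVmeas hTmeas, hmap]
  -- algebra on the LHS
  have halg : ENNReal.ofReal (∑ j : Fin N, (K : ℝ) / D j)
      = ∑ m0 : Fin N × Fin K, ENNReal.ofReal (1 / D m0.1) := by
    rw [ENNReal.ofReal_sum_of_nonneg (fun j _ => div_nonneg (Nat.cast_nonneg K) (hD0 j).le)]
    rw [Fintype.sum_prod_type]
    refine Finset.sum_congr rfl fun j _ => ?_
    have h1 : ∑ y : Fin K, ENNReal.ofReal (1 / D (j, y).1)
        = (K : ℝ≥0∞) * ENNReal.ofReal (1 / D j) := by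
      simp [Finset.sum_const, Finset.card_univ]
    rw [h1, ← ENNReal.ofReal_natCast K, ← ENNReal.ofReal_mul (Nat.cast_nonneg K)]
    congr 1
    field_simp
  calc ENNReal.ofReal (∑ j : Fin N, (K : ℝ) /
        ∑ i : Fin N, (max (q i / q j) (p i / p j) + ((K : ℝ) - 1) * (q i / q j)))
      = ∑ m0 : Fin N × Fin K, ENNReal.ofReal (1 / D m0.1) := halg
    _ = ν T := hνT.symm
    _ = μ (V ⁻¹' T) := hμT.symm
    _ ≤ μ {ω | ∃ k : Fin K, X k ω = Y ω} := hle
end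

section
/- List matching lemma, conditional form: under Gumbel-max list sampling, for every j ∈ {1,…,N}, Pr[Y ∈ {X^(1), …, X^(K)} | Y = j] ≥ ( 1 + q_j/(K·p_j) )^{−1}. (Theorem 1, equation (4).) -/
open MeasureTheory ProbabilityTheory

open Real Set


lemma tail_integral {κ : Type*} [Unique κ] (F : Fintype κ) {σ : Type*} [Fintype σ]
    (d : σ → ℝ) (hd : ∀ m, 0 ≤ d m) (I : ℝ → Set ℝ)
    (hIio : expMeasure 1 (Iio 0) = 0)
    (hexpI : ∀ {t : ℝ}, 0 ≤ t → expMeasure 1 (I t) = ENNReal.ofReal (exp (-t)))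
    (hlap : ∀ {A : ℝ}, 0 ≤ A →
      ∫⁻ t, ENNReal.ofReal (exp (-(A * t))) ∂(expMeasure 1) = ENNReal.ofReal (1 + A)⁻¹) :
    ∫⁻ a : κ → ℝ, (∏ m : σ, expMeasure 1 (I (d m * a default)))
        ∂(@Measure.pi κ (fun _ => ℝ) F _ (fun _ => expMeasure 1))
      = ENNReal.ofReal (1 + ∑ m : σ, d m)⁻¹ := by
  rw [Subsingleton.elim F Unique.fintype]
  set ν := expMeasure 1 with hν
  set A : ℝ := ∑ m : σ, d m with hA
  have hApos : 0 ≤ A := Finset.sum_nonneg fun m _ => hd _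
  have hae : ∀ᵐ a ∂(@Measure.pi κ (fun _ => ℝ) Unique.fintype _ (fun _ => ν)), 0 ≤ a default := by
    have h0 := (measurePreserving_funUnique ν κ).measure_preimage
      ((measurableSet_Iio (a := (0:ℝ)))).nullMeasurableSet
    rw [hν] at h0 ⊢
    rw [hIio] at h0
    have hset : {a : κ → ℝ | ¬ 0 ≤ a default}
        = ⇑(MeasurableEquiv.funUnique κ ℝ) ⁻¹' (Iio 0) := by
      ext a; simp [MeasurableEquiv.funUnique, Equiv.funUnique, not_le]
    rw [ae_iff, hset]
    exact h0
  rw [lintegral_congr_ae (g := fun a : κ → ℝ =>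
      ENNReal.ofReal (exp (-(A * a default)))) ?_]
  · calc ∫⁻ a : κ → ℝ, ENNReal.ofReal (exp (-(A * a default)))
          ∂(@Measure.pi κ (fun _ => ℝ) Unique.fintype _ (fun _ => ν))
        = ∫⁻ t, ENNReal.ofReal (exp (-(A * t))) ∂ν :=
          (measurePreserving_funUnique ν κ).lintegral_comp
            ((Real.measurable_exp.comp (measurable_const.mul measurable_id).neg).ennreal_ofReal)
      _ = ENNReal.ofReal (1 + A)⁻¹ := hlap hApos
  · filter_upwards [hae] with a ha
    calc ∏ m : σ, ν (I (d m * a default))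
        = ∏ m : σ, ENNReal.ofReal (exp (-(d m * a default))) :=
          Finset.prod_congr rfl fun m _ => hexpI (mul_nonneg (hd _) ha)
      _ = ENNReal.ofReal (∏ m : σ, exp (-(d m * a default))) :=
          (ENNReal.ofReal_prod_of_nonneg (fun _ _ => (exp_pos _).le)).symm
      _ = ENNReal.ofReal (exp (-(A * a default))) := by
          rw [← Real.exp_sum]
          congr 1
          rw [hA, Finset.sum_mul, ← Finset.sum_neg_distrib]

lemma key_pi_measure {ι : Type*} [Fintype ι] [DecidableEq ι] (m0 : ι) (c : ι → ℝ)
    (hc : ∀ m, 0 ≤ c m) (I : ℝ → Set ℝ) (hI : I = Set.Ioi ∨ I = Set.Ici)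
    (hIio : expMeasure 1 (Iio 0) = 0)
    (hexpI : ∀ {t : ℝ}, 0 ≤ t → expMeasure 1 (I t) = ENNReal.ofReal (exp (-t)))
    (hlap : ∀ {A : ℝ}, 0 ≤ A →
      ∫⁻ t, ENNReal.ofReal (exp (-(A * t))) ∂(expMeasure 1) = ENNReal.ofReal (1 + A)⁻¹) :
    Measure.pi (fun _ : ι => expMeasure 1) {x | ∀ m, m ≠ m0 → x m ∈ I (c m * x m0)}
      = ENNReal.ofReal (1 + ∑ m ∈ Finset.univ.erase m0, c m)⁻¹ := by
  haveI : IsProbabilityMeasure (expMeasure 1) := isProbabilityMeasure_expMeasure one_pos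
  classical
  set ν := expMeasure 1 with hν
  have hImeas : ∀ t : ℝ, MeasurableSet (I t) := by
    rcases hI with h | h <;> subst h <;> intro t
    · exact measurableSet_Ioi
    · exact measurableSet_Ici
  set pred : ι → Prop := fun m => m = m0 with hpred
  haveI : DecidablePred pred := fun m => decEq m m0
  haveI hu : Unique {m // pred m} := ⟨⟨⟨m0, rfl⟩⟩, fun a => Subtype.ext a.2⟩
  haveI hft : Fintype {m // pred m} := Unique.fintype
  have hdef : ((default : {m // pred m}) : ι) = m0 := (default : {m // pred m}).2
  set B : Set ((∀ _ : {m // pred m}, ℝ) × (∀ _ : {m // ¬ pred m}, ℝ)) :=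
    {z | ∀ m : {m // ¬ pred m}, z.2 m ∈ I (c m.1 * z.1 default)} with hB
  have hBmeas : MeasurableSet B := by
    have : B = ⋂ m : {m // ¬ pred m}, {z : (∀ _ : {m // pred m}, ℝ) × (∀ _ : {m // ¬ pred m}, ℝ) |
        z.2 m ∈ I (c m.1 * z.1 default)} := by
      ext z; simp [hB]
    rw [this]
    refine MeasurableSet.iInter fun m => ?_
    have h1 : Measurable fun z : (∀ _ : {m // pred m}, ℝ) × (∀ _ : {m // ¬ pred m}, ℝ) =>
        z.2 m := (measurable_pi_apply m).comp measurable_snd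
    have h2 : Measurable fun z : (∀ _ : {m // pred m}, ℝ) × (∀ _ : {m // ¬ pred m}, ℝ) =>
        c m.1 * z.1 default := ((measurable_pi_apply _).comp measurable_fst).const_mul _
    rcases hI with h | h <;> subst h
    · exact measurableSet_lt h2 h1
    · exact measurableSet_le h2 h1
  have hmp := measurePreserving_piEquivPiSubtypeProd (fun _ : ι => ν) pred
  have h1 := hmp.measure_preimage hBmeas.nullMeasurableSet
  have hpre : ⇑(MeasurableEquiv.piEquivPiSubtypeProd (fun _ : ι => ℝ) pred) ⁻¹' B
      = {x : ι → ℝ | ∀ m, m ≠ m0 → x m ∈ I (c m * x m0)} := by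
    ext x
    simp only [MeasurableEquiv.piEquivPiSubtypeProd, Equiv.piEquivPiSubtypeProd,
      MeasurableEquiv.coe_mk, Equiv.coe_fn_mk, mem_preimage, mem_setOf_eq, hB]
    constructor
    · intro h m hm; have := h ⟨m, hm⟩; simpa [hdef] using this
    · intro h m; have := h m.1 m.2; simpa [hdef] using this
  rw [hpre] at h1
  rw [h1, Measure.prod_apply hBmeas]
  have hslice : ∀ a : ({m // pred m} → ℝ), Prod.mk a ⁻¹' B
      = univ.pi (fun m : {m // ¬ pred m} => I (c m.1 * a default)) := by
    intro a; ext y; simp [hB, Set.mem_univ_pi]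
  simp_rw [hslice, Measure.pi_pi]
  refine (tail_integral _ (fun m : {m // ¬ pred m} => c m.1) (fun m => hc _) I hIio
    (fun {t} ht => hexpI ht) (fun {A} hA => hlap hA)).trans ?_
  congr 1
  rw [← Finset.sum_subtype (Finset.univ.erase m0)
    (fun x => by simp [Finset.mem_erase, hpred]) c]

lemma gls_expMeasure_Iic {t : ℝ} : expMeasure 1 (Iic t) =
    ENNReal.ofReal (if 0 ≤ t then 1 - exp (-t) else 0) := by
  rw [show expMeasure 1 = volume.withDensity (exponentialPDF 1) from rfl,
    withDensity_apply _ measurableSet_Iic,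
    lintegral_exponentialPDF_eq_antiDeriv one_pos t]
  simp

lemma gls_expMeasure_Iio_zero : expMeasure 1 (Iio 0) = 0 := by
  rw [show expMeasure 1 = volume.withDensity (exponentialPDF 1) from rfl,
    withDensity_apply _ measurableSet_Iio]
  exact lintegral_exponentialPDF_of_nonpos le_rfl

lemma gls_expMeasure_Ioi {t : ℝ} (ht : 0 ≤ t) :
    expMeasure 1 (Ioi t) = ENNReal.ofReal (exp (-t)) := by
  haveI : IsProbabilityMeasure (expMeasure 1) := isProbabilityMeasure_expMeasure one_pos
  have h := measure_compl (μ := expMeasure 1) measurableSet_Iic (measure_ne_top _ (Iic t))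
  rw [compl_Iic] at h
  rw [h, measure_univ, gls_expMeasure_Iic, if_pos ht]
  rw [show (1 : ENNReal) = ENNReal.ofReal 1 by simp,
    ← ENNReal.ofReal_sub _ (by simp [exp_le_one_iff.2 (by linarith : -t ≤ 0)])]
  norm_num

lemma gls_expMeasure_Ici {t : ℝ} (ht : 0 ≤ t) :
    expMeasure 1 (Ici t) = ENNReal.ofReal (exp (-t)) := by
  rw [← gls_expMeasure_Ioi ht]
  refine le_antisymm ?_ (measure_mono Ioi_subset_Ici_self)
  have hsing : expMeasure 1 {t} = 0 :=
    (withDensity_absolutelyContinuous volume _) (Real.volume_singleton)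
  calc expMeasure 1 (Ici t) ≤ expMeasure 1 (Ioi t) + expMeasure 1 {t} := by
        rw [← Set.Ioi_union_left]; exact measure_union_le _ _
    _ = expMeasure 1 (Ioi t) := by rw [hsing, add_zero]

lemma gls_expMeasure_laplace {A : ℝ} (hA : 0 ≤ A) :
    ∫⁻ t, ENNReal.ofReal (exp (-(A * t))) ∂(expMeasure 1) = ENNReal.ofReal (1 + A)⁻¹ := by
  have h1A : (0:ℝ) < 1 + A := by linarith
  rw [show expMeasure 1 = volume.withDensity (exponentialPDF 1) from rfl,
    lintegral_withDensity_eq_lintegral_mul volume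
    (show Measurable (exponentialPDF 1) from (measurable_gammaPDFReal 1 1).ennreal_ofReal)
    (by exact (Real.measurable_exp.comp (measurable_const.mul measurable_id).neg).ennreal_ofReal)]
  have hpt : ∀ t : ℝ, (exponentialPDF 1 * fun t => ENNReal.ofReal (exp (-(A * t)))) t
      = ENNReal.ofReal (1 + A)⁻¹ * exponentialPDF (1 + A) t := by
    intro t
    rcases lt_or_ge t 0 with h | h
    · simp [exponentialPDF_of_neg h]
    · rw [Pi.mul_apply, exponentialPDF_of_nonneg h, exponentialPDF_of_nonneg h,
        ← ENNReal.ofReal_mul (by positivity), ← ENNReal.ofReal_mul (by positivity)]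
      congr 1
      rw [one_mul, ← Real.exp_add]
      rw [show (1+A)⁻¹ * ((1+A) * exp (-((1+A)*t))) = exp (-((1+A)*t)) by field_simp]
      ring_nf
  simp_rw [hpt]
  rw [lintegral_const_mul _ (show Measurable (exponentialPDF (1+A)) from (measurable_gammaPDFReal 1 (1+A)).ennreal_ofReal),
    lintegral_exponentialPDF_eq_one h1A, mul_one]

lemma gls_map_eq_pi {Ω : Type*} [MeasurableSpace Ω] (μ : Measure Ω) [IsProbabilityMeasure μ]
    {ι : Type*} [Fintype ι] (f : ι → Ω → ℝ) (hmeas : ∀ m, Measurable (f m))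
    (hindep : iIndepFun f μ)
    (hexp : ∀ m, μ.map (f m) = expMeasure 1) :
    μ.map (fun ω m => f m ω) = Measure.pi (fun _ : ι => expMeasure 1) := by
  haveI : IsProbabilityMeasure (expMeasure 1) := isProbabilityMeasure_expMeasure one_pos
  refine (Measure.pi_eq fun s hs => ?_).symm
  rw [Measure.map_apply (measurable_pi_lambda _ hmeas) (MeasurableSet.univ_pi hs)]
  have hpre : (fun ω m => f m ω) ⁻¹' (univ.pi s) = ⋂ m ∈ Finset.univ, f m ⁻¹' s m := by
    ext ω; simp [Set.mem_univ_pi]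
  rw [hpre, hindep.measure_inter_preimage_eq_mul Finset.univ (fun m _ => hs m)]
  exact Finset.prod_congr rfl fun m _ => by rw [← Measure.map_apply (hmeas m) (hs m), hexp m]



/-- **List matching lemma, conditional form (Theorem 1, eq. (4)).**
Under Gumbel-max list sampling, for every `j`,
`Pr[Y ∈ {X 1, …, X K} | Y = j] ≥ (1 + q j / (K * p j))⁻¹`. -/
theorem list_matching_lemma_conditional
    {Ω : Type*} [MeasurableSpace Ω] (μ : Measure Ω) [IsProbabilityMeasure μ]
    (N K : ℕ) (hN : 0 < N) (hK : 0 < K)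
    (p q : Fin N → ℝ) (hp : ∀ i, 0 < p i) (hq : ∀ i, 0 < q i)
    (hpsum : ∑ i, p i = 1) (hqsum : ∑ i, q i = 1)
    (S : Fin N → Fin K → Ω → ℝ) (hSmeas : ∀ i k, Measurable (S i k))
    (hSindep : iIndepFun
      (fun ik : Fin N × Fin K => S ik.1 ik.2) μ)
    (hSexp : ∀ i k, μ.map (S i k) = expMeasure 1)
    (Y : Ω → Fin N) (hYmeas : Measurable Y)
    (X : Fin K → Ω → Fin N) (hXmeas : ∀ k, Measurable (X k))
    -- `Y` is a.s. the unique argmin of `i ↦ (min_k S i k) / q i`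
    (hY : ∀ᵐ ω ∂μ, ∀ i : Fin N, i ≠ Y ω →
      (⨅ k : Fin K, S (Y ω) k ω) / q (Y ω) < (⨅ k : Fin K, S i k ω) / q i)
    -- each `X k` is a.s. the unique argmin of `i ↦ S i k / p i`
    (hX : ∀ᵐ ω ∂μ, ∀ k : Fin K, ∀ i : Fin N, i ≠ X k ω →
      S (X k ω) k ω / p (X k ω) < S i k ω / p i)
    : ∀ j : Fin N,
      ENNReal.ofReal ((1 + q j / ((K : ℝ) * p j))⁻¹)
        ≤ μ[|{ω | Y ω = j}] {ω | ∃ k : Fin K, X k ω = Y ω} := by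
  intro j
  haveI : NeZero K := ⟨hK.ne'⟩
  classical
  -- basic positivity
  have hKR : (1:ℝ) ≤ (K:ℝ) := by exact_mod_cast hK
  have hqj := hq j
  have hpj := hp j
  -- the joint map
  set g : Ω → (Fin N × Fin K) → ℝ := fun ω m => S m.1 m.2 ω with hgdef
  have hg : Measurable g := measurable_pi_lambda _ fun m => hSmeas m.1 m.2
  have hmap : μ.map g = Measure.pi (fun _ : Fin N × Fin K => expMeasure 1) :=
    gls_map_eq_pi μ (fun m : Fin N × Fin K => S m.1 m.2) (fun m => hSmeas m.1 m.2)
      hSindep (fun m => hSexp m.1 m.2)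
  -- coefficient functions
  set cs : Fin K → (Fin N × Fin K) → ℝ := fun k0 m =>
    if m.1 = j then 1 else if m.2 = k0 then max (q m.1 / q j) (p m.1 / p j) else q m.1 / q j
    with hcs
  set cw : (Fin N × Fin K) → ℝ := fun m => if m.1 = j then 1 else q m.1 / q j with hcw
  have hcs0 : ∀ k0 m, 0 ≤ cs k0 m := by
    intro k0 m; rw [hcs]; dsimp only
    split_ifs
    · norm_num
    · exact le_max_of_le_left (div_nonneg (hq _).le (hq _).le)
    · exact div_nonneg (hq _).le (hq _).le
  have hcw0 : ∀ m, 0 ≤ cw m := by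
    intro m; rw [hcw]; dsimp only
    split_ifs
    · norm_num
    · exact div_nonneg (hq _).le (hq _).le
  -- events
  set Es : Fin K → Set ((Fin N × Fin K) → ℝ) := fun k0 =>
    {x | ∀ m, m ≠ (j, k0) → x m ∈ Ioi (cs k0 m * x (j, k0))} with hEs
  set Ew : Fin K → Set ((Fin N × Fin K) → ℝ) := fun k0 =>
    {x | ∀ m, m ≠ (j, k0) → x m ∈ Ici (cw m * x (j, k0))} with hEw
  have hEsMeas : ∀ k0, MeasurableSet (Es k0) := by
    intro k0
    rw [hEs]; dsimp only
    rw [Set.setOf_forall]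
    refine MeasurableSet.iInter fun m => ?_
    by_cases hm : m = (j, k0)
    · simp [hm]
    · simp only [hm, ne_eq, not_false_iff, forall_true_left, mem_Ioi]
      exact measurableSet_lt ((measurable_pi_apply _).const_mul _) (measurable_pi_apply m)
  have hEwMeas : ∀ k0, MeasurableSet (Ew k0) := by
    intro k0
    rw [hEw]; dsimp only
    rw [Set.setOf_forall]
    refine MeasurableSet.iInter fun m => ?_
    by_cases hm : m = (j, k0)
    · simp [hm]
    · simp only [hm, ne_eq, not_false_iff, forall_true_left, mem_Ici]
      exact measurableSet_le ((measurable_pi_apply _).const_mul _) (measurable_pi_apply m)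
  set Fs : Fin K → Set Ω := fun k0 => g ⁻¹' (Es k0) with hFs
  set Fw : Fin K → Set Ω := fun k0 => g ⁻¹' (Ew k0) with hFw
  -- measures of the events
  have hμFs : ∀ k0, μ (Fs k0)
      = ENNReal.ofReal (1 + ∑ m ∈ Finset.univ.erase (j, k0), cs k0 m)⁻¹ := by
    intro k0
    have h := key_pi_measure (ι := Fin N × Fin K) (j, k0) (cs k0) (hcs0 k0) Set.Ioi
      (Or.inl rfl) gls_expMeasure_Iio_zero (fun {t} ht => gls_expMeasure_Ioi ht)
      (fun {A} hA => gls_expMeasure_laplace hA)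
    rw [← hmap, Measure.map_apply hg (hEsMeas k0)] at h
    exact h
  have hμFw : ∀ k0, μ (Fw k0)
      = ENNReal.ofReal (1 + ∑ m ∈ Finset.univ.erase (j, k0), cw m)⁻¹ := by
    intro k0
    have h := key_pi_measure (ι := Fin N × Fin K) (j, k0) cw hcw0 Set.Ici
      (Or.inr rfl) gls_expMeasure_Iio_zero (fun {t} ht => gls_expMeasure_Ici ht)
      (fun {A} hA => gls_expMeasure_laplace hA)
    rw [← hmap, Measure.map_apply hg (hEwMeas k0)] at h
    exact h
  -- sums of the coefficients
  set Qs : ℝ := ∑ i ∈ Finset.univ.erase j, q i / q j with hQsdef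
  set Cs : ℝ := ∑ i ∈ Finset.univ.erase j, max (q i / q j) (p i / p j) with hCsdef
  have hsum_cs : ∀ k0 : Fin K, ∑ m ∈ Finset.univ.erase (j, k0), cs k0 m
      = ((K:ℝ) - 1) + Cs + ((K:ℝ) - 1) * Qs := by
    intro k0
    have h1 := Finset.add_sum_erase Finset.univ (cs k0) (Finset.mem_univ (j, k0))
    have hjk0 : cs k0 (j, k0) = 1 := by rw [hcs]; simp
    have h2 : ∑ m : Fin N × Fin K, cs k0 m = (K:ℝ) + (Cs + ((K:ℝ) - 1) * Qs) := by
      rw [Fintype.sum_prod_type]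
      have hrow : ∀ i : Fin N, ∑ k : Fin K, cs k0 (i, k)
          = if i = j then (K:ℝ)
            else max (q i / q j) (p i / p j) + ((K:ℝ) - 1) * (q i / q j) := by
        intro i
        by_cases hi : i = j
        · subst hi
          rw [if_pos rfl, hcs]
          simp
        · rw [if_neg hi]
          have h3 : ∀ k, cs k0 (i, k)
              = if k = k0 then max (q i / q j) (p i / p j) else q i / q j := by
            intro k; rw [hcs]; simp [hi]
          simp_rw [h3]
          rw [← Finset.add_sum_erase Finset.univ _ (Finset.mem_univ k0), if_pos rfl]
          congr 1
          rw [Finset.sum_congr rfl (fun k hk => if_neg (Finset.mem_erase.mp hk).1),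
            Finset.sum_const, Finset.card_erase_of_mem (Finset.mem_univ k0),
            Finset.card_univ, Fintype.card_fin, nsmul_eq_mul, Nat.cast_sub hK, Nat.cast_one]
      simp_rw [hrow]
      rw [← Finset.add_sum_erase Finset.univ _ (Finset.mem_univ j), if_pos rfl]
      congr 1
      rw [Finset.sum_congr rfl (fun i hi => if_neg (Finset.mem_erase.mp hi).1),
        Finset.sum_add_distrib, ← Finset.mul_sum, hCsdef, hQsdef]
    rw [h2, hjk0] at h1
    linarith
  have hsum_cw : ∀ k0 : Fin K, ∑ m ∈ Finset.univ.erase (j, k0), cw m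
      = ((K:ℝ) - 1) + (K:ℝ) * Qs := by
    intro k0
    have h1 := Finset.add_sum_erase Finset.univ cw (Finset.mem_univ (j, k0))
    have hjk0 : cw (j, k0) = 1 := by rw [hcw]; simp
    have h2 : ∑ m : Fin N × Fin K, cw m = (K:ℝ) + (K:ℝ) * Qs := by
      rw [Fintype.sum_prod_type]
      have hrow : ∀ i : Fin N, ∑ k : Fin K, cw (i, k)
          = if i = j then (K:ℝ) else (K:ℝ) * (q i / q j) := by
        intro i
        by_cases hi : i = j
        · subst hi; rw [if_pos rfl, hcw]; simp
        · rw [if_neg hi]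
          have h3 : ∀ k : Fin K, cw (i, k) = q i / q j := by
            intro k; rw [hcw]; simp [hi]
          simp_rw [h3]
          rw [Finset.sum_const, Finset.card_univ, Fintype.card_fin, nsmul_eq_mul]
      simp_rw [hrow]
      rw [← Finset.add_sum_erase Finset.univ _ (Finset.mem_univ j), if_pos rfl]
      congr 1
      rw [Finset.sum_congr rfl (fun i hi => if_neg (Finset.mem_erase.mp hi).1),
        ← Finset.mul_sum, hQsdef]
    rw [h2, hjk0] at h1
    linarith
    -- real facts
  have hsq : ∑ i ∈ Finset.univ.erase j, q i = 1 - q j := by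
    have h := Finset.add_sum_erase Finset.univ q (Finset.mem_univ j)
    rw [hqsum] at h; linarith
  have hsp : ∑ i ∈ Finset.univ.erase j, p i = 1 - p j := by
    have h := Finset.add_sum_erase Finset.univ p (Finset.mem_univ j)
    rw [hpsum] at h; linarith
  have hQs_eq : Qs = (1 - q j) / q j := by rw [hQsdef, ← Finset.sum_div, hsq]
  have hQs0 : 0 ≤ Qs :=
    Finset.sum_nonneg fun i _ => div_nonneg (hq i).le (hq j).le
  have hCs0 : 0 ≤ Cs := Finset.sum_nonneg fun i _ =>
    le_max_of_le_left (div_nonneg (hq i).le (hq j).le)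
  have hCs_le : Cs ≤ (1 - q j) / q j + (1 - p j) / p j := by
    rw [hCsdef]
    calc ∑ i ∈ Finset.univ.erase j, max (q i / q j) (p i / p j)
        ≤ ∑ i ∈ Finset.univ.erase j, (q i / q j + p i / p j) :=
          Finset.sum_le_sum fun i _ => max_le
            (le_add_of_nonneg_right (div_nonneg (hp i).le (hp j).le))
            (le_add_of_nonneg_left (div_nonneg (hq i).le (hq j).le))
      _ = (1 - q j) / q j + (1 - p j) / p j := by
          rw [Finset.sum_add_distrib, ← Finset.sum_div, ← Finset.sum_div, hsq, hsp]
  have e1 : q j * Qs = 1 - q j := by rw [hQs_eq]; field_simp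
  have e3 : q j * Cs ≤ (1 - q j) + (q j / p j - q j) := by
    have h := mul_le_mul_of_nonneg_left hCs_le (hq j).le
    have e2 : q j * ((1 - q j) / q j + (1 - p j) / p j)
        = (1 - q j) + (q j / p j - q j) := by field_simp
    linarith [e2 ▸ h]
  have e5 : ((K:ℝ) - 1) * (q j * Qs) = ((K:ℝ) - 1) * (1 - q j) := by rw [e1]
  have key1 : q j * ((K:ℝ) + Cs + ((K:ℝ) - 1) * Qs) ≤ (K:ℝ) + q j / p j := by
    nlinarith [e1, e3, e5, (hq j).le]
  set D : ℝ := (K:ℝ) + Cs + ((K:ℝ) - 1) * Qs with hD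
  have hD_pos : (0:ℝ) < D := by rw [hD]; nlinarith [hCs0, hQs0, hKR]
  have hKpos : (0:ℝ) < (K:ℝ) := by exact_mod_cast hK
  have hx_pos : (0:ℝ) < 1 + q j / ((K:ℝ) * p j) := by positivity
  have hrq : (1 + q j / ((K:ℝ) * p j))⁻¹ * q j ≤ (K:ℝ) * D⁻¹ := by
    rw [inv_mul_eq_div, ← div_eq_mul_inv, div_le_div_iff₀ hx_pos hD_pos]
    have hKr : (K:ℝ) * (1 + q j / ((K:ℝ) * p j)) = (K:ℝ) + q j / p j := by
      field_simp
    linarith [key1, hKr]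
  have hWq : (K:ℝ) * (1 + (((K:ℝ) - 1) + (K:ℝ) * Qs))⁻¹ = q j := by
    have h1 : 1 + (((K:ℝ) - 1) + (K:ℝ) * Qs) = (K:ℝ) / q j := by
      rw [hQs_eq]; field_simp; ring
    rw [h1, inv_div]
    field_simp
  -- probabilistic part
  set sY : Set Ω := {ω | Y ω = j} with hsYdef
  have hsYmeas : MeasurableSet sY := hYmeas (measurableSet_singleton j)
  have hpos : ∀ᵐ ω ∂μ, ∀ i k, 0 ≤ S i k ω := by
    rw [ae_all_iff]; intro i; rw [ae_all_iff]; intro k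
    rw [ae_iff]
    have hset : {ω | ¬ 0 ≤ S i k ω} = S i k ⁻¹' (Iio 0) := by ext ω; simp [not_le]
    rw [hset, ← Measure.map_apply (hSmeas i k) measurableSet_Iio, hSexp i k]
    exact gls_expMeasure_Iio_zero
  have hbdd : ∀ (i : Fin N) (ω : Ω), BddBelow (Set.range fun k => S i k ω) :=
    fun i ω => Finite.bddBelow_range _
  have hsub1 : ∀ᵐ ω ∂μ, ω ∈ ⋃ k0, Fs k0 → ω ∈ sY ∩ {ω | ∃ k, X k ω = Y ω} := by
    filter_upwards [hY, hX, hpos] with ω hYω hXω hposω hω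
    obtain ⟨k0, hk0⟩ := Set.mem_iUnion.mp hω
    simp only [hFs, hEs, hgdef, Set.mem_preimage, Set.mem_setOf_eq, Set.mem_Ioi] at hk0
    have ht : 0 ≤ S j k0 ω := hposω j k0
    have hjk : ∀ k', k' ≠ k0 → S j k0 ω < S j k' ω := by
      intro k' hk'
      have h := hk0 (j, k') (by simp [Prod.ext_iff, hk'])
      simpa [hcs] using h
    have hiq : ∀ i, i ≠ j → ∀ k, q i / q j * S j k0 ω < S i k ω := by
      intro i hi k
      have h := hk0 (i, k) (by simp [Prod.ext_iff, hi])
      by_cases hkk : k = k0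
      · subst hkk
        simp only [hcs, hi, if_false, if_pos rfl] at h
        exact lt_of_le_of_lt (mul_le_mul_of_nonneg_right (le_max_left _ _) ht) h
      · simpa [hcs, hi, hkk] using h
    have hip : ∀ i, i ≠ j → p i / p j * S j k0 ω < S i k0 ω := by
      intro i hi
      have h := hk0 (i, k0) (by simp [Prod.ext_iff, hi])
      simp only [hcs, hi, if_false, if_pos rfl] at h
      exact lt_of_le_of_lt (mul_le_mul_of_nonneg_right (le_max_right _ _) ht) h
    have hTj : (⨅ k, S j k ω) = S j k0 ω :=
      le_antisymm (ciInf_le (hbdd j ω) k0)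
        (le_ciInf fun k => by
          rcases eq_or_ne k k0 with rfl | h
          · exact le_rfl
          · exact (hjk k h).le)
    have hTlb : ∀ i, i ≠ j → q i / q j * S j k0 ω < ⨅ k, S i k ω := by
      intro i hi
      obtain ⟨k1, hk1⟩ := Finite.exists_min fun k => S i k ω
      have hmin : (⨅ k, S i k ω) = S i k1 ω :=
        le_antisymm (ciInf_le (hbdd i ω) k1) (le_ciInf hk1)
      rw [hmin]; exact hiq i hi k1
    have hYj : Y ω = j := by
      by_contra hne
      have h1 := hYω j (fun h => hne h.symm)
      rw [hTj] at h1
      have h2 := hTlb (Y ω) hne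
      have h1' : (⨅ k, S (Y ω) k ω) * q j < S j k0 ω * q (Y ω) :=
        (div_lt_div_iff₀ (hq (Y ω)) (hq j)).mp h1
      have h2' : q (Y ω) * S j k0 ω < (⨅ k, S (Y ω) k ω) * q j := by
        rw [div_mul_eq_mul_div] at h2
        exact (div_lt_iff₀ (hq j)).mp h2
      linarith [mul_comm (q (Y ω)) (S j k0 ω)]
    have hXk0 : X k0 ω = j := by
      by_contra hne
      have h1 := hXω k0 j (fun h => hne h.symm)
      have h2 := hip (X k0 ω) hne
      have h1' : S (X k0 ω) k0 ω * p j < S j k0 ω * p (X k0 ω) :=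
        (div_lt_div_iff₀ (hp (X k0 ω)) (hp j)).mp h1
      have h2' : p (X k0 ω) * S j k0 ω < S (X k0 ω) k0 ω * p j := by
        rw [div_mul_eq_mul_div] at h2
        exact (div_lt_iff₀ (hp j)).mp h2
      linarith [mul_comm (p (X k0 ω)) (S j k0 ω)]
    exact ⟨hYj, ⟨k0, by rw [hXk0, hYj]⟩⟩
  have hsub2 : ∀ᵐ ω ∂μ, ω ∈ sY → ω ∈ ⋃ k0, Fw k0 := by
    filter_upwards [hY, hpos] with ω hYω hposω hmem
    have hYj : Y ω = j := hmem
    obtain ⟨k0, hk0⟩ := Finite.exists_min fun k => S j k ω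
    refine Set.mem_iUnion.mpr ⟨k0, ?_⟩
    simp only [hFw, hEw, hgdef, Set.mem_preimage, Set.mem_setOf_eq, Set.mem_Ici]
    rintro ⟨i, k⟩ hm
    by_cases hi : i = j
    · subst hi
      simp only [hcw, if_pos rfl, one_mul]
      exact hk0 k
    · have hTj : (⨅ k', S j k' ω) = S j k0 ω :=
        le_antisymm (ciInf_le (hbdd j ω) k0) (le_ciInf hk0)
      have h1 := hYω i (by rw [hYj]; exact fun h => hi h)
      rw [hYj, hTj] at h1
      have h1' : S j k0 ω * q i < (⨅ k', S i k' ω) * q j :=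
        (div_lt_div_iff₀ (hq j) (hq i)).mp h1
      have h2 : (⨅ k', S i k' ω) ≤ S i k ω := ciInf_le (hbdd i ω) k
      simp only [hcw, hi, if_false]
      have h3 : q i / q j * S j k0 ω < ⨅ k', S i k' ω := by
        rw [div_mul_eq_mul_div, div_lt_iff₀ (hq j)]
        linarith [mul_comm (q i) (S j k0 ω)]
      linarith
  have hdisj : Pairwise (Function.onFun Disjoint Fs) := by
    intro k0 k1 hne
    rw [Function.onFun, Set.disjoint_left]
    intro ω h0 h1
    simp only [hFs, hEs, hgdef, Set.mem_preimage, Set.mem_setOf_eq, Set.mem_Ioi] at h0 h1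
    have ha := h0 (j, k1) (by simp [Prod.ext_iff, Ne.symm hne])
    have hb := h1 (j, k0) (by simp [Prod.ext_iff, hne])
    simp only [hcs, if_pos rfl, one_mul] at ha hb
    linarith
  have hFsMeas : ∀ k0, MeasurableSet (Fs k0) := fun k0 => hg (hEsMeas k0)
  have hμFs' : ∀ k0, μ (Fs k0) = ENNReal.ofReal D⁻¹ := by
    intro k0
    rw [hμFs k0, hsum_cs k0]
    congr 2
    rw [hD]; ring
  have hnum : ENNReal.ofReal ((K:ℝ) * D⁻¹) ≤ μ (sY ∩ {ω | ∃ k, X k ω = Y ω}) := by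
    calc ENNReal.ofReal ((K:ℝ) * D⁻¹)
        = (K : ENNReal) * ENNReal.ofReal D⁻¹ := by
          rw [ENNReal.ofReal_mul (by positivity), ENNReal.ofReal_natCast]
      _ = ∑' k0 : Fin K, μ (Fs k0) := by
          rw [tsum_fintype]
          simp only [hμFs']
          rw [Finset.sum_const, Finset.card_univ, Fintype.card_fin, nsmul_eq_mul]
      _ = μ (⋃ k0, Fs k0) := (measure_iUnion hdisj hFsMeas).symm
      _ ≤ μ (sY ∩ {ω | ∃ k, X k ω = Y ω}) := measure_mono_ae hsub1
  have hden : μ sY ≤ ENNReal.ofReal (q j) := by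
    calc μ sY ≤ μ (⋃ k0, Fw k0) := measure_mono_ae hsub2
      _ ≤ ∑' k0 : Fin K, μ (Fw k0) := measure_iUnion_le _
      _ = ENNReal.ofReal (q j) := by
          rw [tsum_fintype]
          have hval : ∀ k0 : Fin K,
              μ (Fw k0) = ENNReal.ofReal (1 + (((K:ℝ) - 1) + (K:ℝ) * Qs))⁻¹ := by
            intro k0; rw [hμFw k0, hsum_cw k0]
          simp only [hval]
          rw [Finset.sum_const, Finset.card_univ, Fintype.card_fin, nsmul_eq_mul,
            ← ENNReal.ofReal_natCast K, ← ENNReal.ofReal_mul (by positivity), hWq]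
  rw [cond_apply hsYmeas]
  have hr0 : (0:ℝ) ≤ (1 + q j / ((K:ℝ) * p j))⁻¹ := by positivity
  have hrq' : ENNReal.ofReal ((1 + q j / ((K:ℝ) * p j))⁻¹) * μ sY
      ≤ μ (sY ∩ {ω | ∃ k, X k ω = Y ω}) := by
    calc ENNReal.ofReal ((1 + q j / ((K:ℝ) * p j))⁻¹) * μ sY
        ≤ ENNReal.ofReal ((1 + q j / ((K:ℝ) * p j))⁻¹) * ENNReal.ofReal (q j) :=
          mul_le_mul_right hden _
      _ = ENNReal.ofReal ((1 + q j / ((K:ℝ) * p j))⁻¹ * q j) :=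
          (ENNReal.ofReal_mul hr0).symm
      _ ≤ ENNReal.ofReal ((K:ℝ) * D⁻¹) := ENNReal.ofReal_le_ofReal hrq
      _ ≤ μ (sY ∩ {ω | ∃ k, X k ω = Y ω}) := hnum
  have hsY0 : μ sY ≠ 0 := by
    intro h0
    have hz : μ (sY ∩ {ω | ∃ k, X k ω = Y ω}) = 0 :=
      le_antisymm (le_trans (measure_mono Set.inter_subset_left) h0.le) (by simp)
    have hpos' : 0 < ENNReal.ofReal ((K:ℝ) * D⁻¹) :=
      ENNReal.ofReal_pos.mpr (mul_pos hKpos (inv_pos.mpr hD_pos))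
    rw [hz] at hnum
    exact hpos'.not_ge hnum
  have hsYtop : μ sY ≠ ⊤ := measure_ne_top μ sY
  calc ENNReal.ofReal ((1 + q j / ((K:ℝ) * p j))⁻¹)
      = (μ sY)⁻¹ * (ENNReal.ofReal ((1 + q j / ((K:ℝ) * p j))⁻¹) * μ sY) := by
        rw [mul_comm (ENNReal.ofReal _), ← mul_assoc, ENNReal.inv_mul_cancel hsY0 hsYtop,
          one_mul]
    _ ≤ (μ sY)⁻¹ * μ (sY ∩ {ω | ∃ k, X k ω = Y ω}) := mul_le_mul_right hrq' _
end

section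
/- Joint lower bound used in the proof of the list matching lemma: under Gumbel-max list sampling, for every j ∈ {1,…,N}, Pr[Y = j and j ∈ {X^(1), …, X^(K)}] ≥ K / ( Σ_{i=1}^{N} [ max{ q_i/q_j , p_i/p_j } + (K − 1)·q_i/q_j ] ). -/
open MeasureTheory ProbabilityTheory

section Aux
open Real Set

lemma expMeasure_one_Ioi {t : ℝ} (ht : 0 ≤ t) :
    expMeasure 1 (Ioi t) = ENNReal.ofReal (Real.exp (-t)) := by
  have hprob : IsProbabilityMeasure (expMeasure 1) := isProbabilityMeasure_expMeasure one_pos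
  have hIic : expMeasure 1 (Iic t) = ENNReal.ofReal (1 - Real.exp (-t)) := by
    have : expMeasure 1 (Iic t) = ∫⁻ y in Iic t, exponentialPDF 1 y := by
      rw [expMeasure, gammaMeasure, withDensity_apply _ measurableSet_Iic]
      rfl
    rw [this, lintegral_exponentialPDF_eq_antiDeriv one_pos, if_pos ht, one_mul]
  have hcompl : Ioi t = (Iic t)ᶜ := compl_Iic.symm
  rw [hcompl, measure_compl measurableSet_Iic (measure_ne_top _ _), hIic, measure_univ]
  rw [← ENNReal.ofReal_one, ← ENNReal.ofReal_sub _ (by nlinarith [Real.exp_nonneg (-t), Real.exp_le_one_iff.mpr (neg_nonpos.mpr ht)])]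
  norm_num
lemma lintegral_expMeasure_exp {s : ℝ} (hs : 0 ≤ s) :
    ∫⁻ t, (if 0 ≤ t then ENNReal.ofReal (Real.exp (-(s * t))) else 0) ∂(expMeasure 1)
      = ENNReal.ofReal (1 / (s + 1)) := by
  have hF : Measurable fun t : ℝ => (if 0 ≤ t then ENNReal.ofReal (Real.exp (-(s * t))) else 0) := by
    apply Measurable.ite measurableSet_Ici _ measurable_const
    exact (measurable_const.mul measurable_id).neg.exp.ennreal_ofReal
  have hpdf : Measurable (exponentialPDF 1) := (measurable_exponentialPDFReal 1).ennreal_ofReal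
  rw [show expMeasure 1 = volume.withDensity (exponentialPDF 1) from rfl,
    lintegral_withDensity_eq_lintegral_mul _ hpdf hF]
  have heq : ∀ t : ℝ, (exponentialPDF 1 * fun t => (if 0 ≤ t then ENNReal.ofReal (Real.exp (-(s * t))) else 0)) t
      = (Ici (0:ℝ)).indicator (fun t => ENNReal.ofReal (Real.exp (-(s + 1) * t))) t := by
    intro t
    simp only [Pi.mul_apply, Set.indicator, mem_Ici]
    by_cases ht : 0 ≤ t
    · rw [if_pos ht, if_pos ht, exponentialPDF_of_nonneg ht, one_mul,
        ← ENNReal.ofReal_mul (Real.exp_nonneg _), ← Real.exp_add]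
      ring_nf
    · rw [if_neg ht, if_neg ht, mul_zero]
  simp_rw [heq]
  rw [lintegral_indicator measurableSet_Ici _,
    Measure.restrict_congr_set Ioi_ae_eq_Ici.symm,
    ← ofReal_integral_eq_lintegral_ofReal
      (IntegrableOn.integrable (by simpa using exp_neg_integrableOn_Ioi 0 (by linarith : (0:ℝ) < s + 1)))
      (Filter.Eventually.of_forall fun t => Real.exp_nonneg _)]
  congr 1
  have := integral_comp_mul_left_Ioi (fun x => Real.exp (-x)) 0 (by linarith : (0:ℝ) < s + 1)
  simp only [neg_mul, mul_zero] at this ⊢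
  rw [this, integral_exp_neg_Ioi, neg_zero, Real.exp_zero, smul_eq_mul, mul_one, one_div]
lemma race_lemma {ι : Type*} [Fintype ι] [DecidableEq ι] (m0 : ι) (c : ι → ℝ)
    (hc : ∀ m, 0 ≤ c m) :
    Measure.pi (fun _ : ι => expMeasure 1)
      {x : ι → ℝ | 0 ≤ x m0 ∧ ∀ m, m ≠ m0 → c m * x m0 < x m}
    = ENNReal.ofReal (1 / (1 + ∑ m ∈ Finset.univ.erase m0, c m)) := by
  have hprob : IsProbabilityMeasure (expMeasure 1) := isProbabilityMeasure_expMeasure one_pos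
  classical
  set p : ι → Prop := fun m => m = m0 with hp
  set e := MeasurableEquiv.piEquivPiSubtypeProd (fun _ : ι => ℝ) p with he
  have hmp := measurePreserving_piEquivPiSubtypeProd (fun _ : ι => expMeasure 1) p
  set A : Set (ι → ℝ) := {x : ι → ℝ | 0 ≤ x m0 ∧ ∀ m, m ≠ m0 → c m * x m0 < x m} with hAdef
  -- sum over the complement subtype
  set s : ℝ := ∑ m : {m // ¬ p m}, c m.1 with hsdef
  have hs : 0 ≤ s := Finset.sum_nonneg fun m _ => hc m.1
  -- the target set in the product space
  set B : Set ((∀ _ : {m // p m}, ℝ) × (∀ _ : {m // ¬ p m}, ℝ)) :=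
    {y | 0 ≤ y.1 ⟨m0, rfl⟩ ∧ ∀ m : {m // ¬ p m}, c m.1 * y.1 ⟨m0, rfl⟩ < y.2 m} with hBdef
  have hBmeas : MeasurableSet B := by
    apply MeasurableSet.inter
    · exact measurableSet_le measurable_const ((measurable_pi_apply _).comp measurable_fst)
    · show MeasurableSet {y : (∀ _ : {m // p m}, ℝ) × (∀ _ : {m // ¬ p m}, ℝ) |
        ∀ m : {m // ¬ p m}, c m.1 * y.1 ⟨m0, rfl⟩ < y.2 m}
      rw [Set.setOf_forall]
      exact MeasurableSet.iInter fun m => measurableSet_lt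
        (((measurable_pi_apply _).comp measurable_fst).const_mul _)
        ((measurable_pi_apply m).comp measurable_snd)
  have hpre : e.symm ⁻¹' A = B := by
    ext y
    simp only [hAdef, hBdef, Set.mem_preimage, Set.mem_setOf_eq, he,
      MeasurableEquiv.piEquivPiSubtypeProd, MeasurableEquiv.symm,
      MeasurableEquiv.coe_mk, Equiv.piEquivPiSubtypeProd_symm_apply]
    rw [dif_pos rfl]
    constructor
    · rintro ⟨h0, h1⟩
      exact ⟨h0, fun m => by simpa [dif_neg m.2] using h1 m.1 m.2⟩
    · rintro ⟨h0, h1⟩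
      refine ⟨h0, fun m hm => ?_⟩
      rw [dif_neg (hm : ¬ p m)]; exact h1 ⟨m, hm⟩
  have hAmeas : MeasurableSet A := by
    have : A = e ⁻¹' B := by rw [← hpre]; ext x; simp
    rw [this]; exact e.measurable hBmeas
  have hπA := ((MeasurePreserving.symm e hmp).measure_preimage hAmeas.nullMeasurableSet).symm
  rw [hpre] at hπA
  rw [hπA, Measure.prod_apply hBmeas]
  have hinner : ∀ a : (∀ _ : {m // p m}, ℝ),
      (Measure.pi fun _ : {m // ¬ p m} => expMeasure 1) (Prod.mk a ⁻¹' B)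
        = if 0 ≤ a ⟨m0, rfl⟩ then ENNReal.ofReal (Real.exp (-(s * a ⟨m0, rfl⟩))) else 0 := by
    intro a
    by_cases ht : 0 ≤ a ⟨m0, rfl⟩
    · rw [if_pos ht]
      have hset : Prod.mk a ⁻¹' B = Set.pi Set.univ (fun m : {m // ¬ p m} => Ioi (c m.1 * a ⟨m0, rfl⟩)) := by
        ext b
        simp [hBdef, ht]
      rw [hset, Measure.pi_pi]
      have : ∀ m : {m // ¬ p m}, expMeasure 1 (Ioi (c m.1 * a ⟨m0, rfl⟩))
          = ENNReal.ofReal (Real.exp (-(c m.1 * a ⟨m0, rfl⟩))) :=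
        fun m => expMeasure_one_Ioi (mul_nonneg (hc m.1) ht)
      simp_rw [this]
      rw [← ENNReal.ofReal_prod_of_nonneg (fun m _ => Real.exp_nonneg _)]
      congr 1
      rw [← Real.exp_sum]
      congr 1
      rw [hsdef, Finset.sum_mul]
      simp
    · rw [if_neg ht]
      have hset : Prod.mk a ⁻¹' B = ∅ := by
        ext b; simp [hBdef, ht]
      simp [hset]
  simp_rw [hinner]
  have hmp2 := measurePreserving_piUnique (fun _ : {m // p m} => expMeasure 1)
  have hFmeas : Measurable fun t : ℝ => (if 0 ≤ t then ENNReal.ofReal (Real.exp (-(s * t))) else 0) := by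
    apply Measurable.ite measurableSet_Ici _ measurable_const
    exact (measurable_const.mul measurable_id).neg.exp.ennreal_ofReal
  have hcomp : ∀ a : (∀ _ : {m // p m}, ℝ),
      (if 0 ≤ a ⟨m0, rfl⟩ then ENNReal.ofReal (Real.exp (-(s * a ⟨m0, rfl⟩))) else 0)
        = (fun t : ℝ => if 0 ≤ t then ENNReal.ofReal (Real.exp (-(s * t))) else 0)
            ((MeasurableEquiv.piUnique (fun _ : {m // p m} => ℝ)) a) := by
    intro a
    have : (MeasurableEquiv.piUnique (fun _ : {m // p m} => ℝ)) a = a ⟨m0, rfl⟩ :=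
      congrArg a (Subsingleton.elim _ _)
    rw [this]
  simp_rw [hcomp]
  have hinst : (Subtype.fintype p : Fintype {m // p m}) = Fintype.subtypeEq m0 :=
    Subsingleton.elim _ _
  rw [hinst]
  refine (hmp2.lintegral_comp hFmeas).trans ?_
  rw [lintegral_expMeasure_exp hs]
  congr 1
  rw [add_comm]
  congr 1
  have hss : ∑ m ∈ Finset.univ.erase m0, c m = ∑ m : {m // ¬ p m}, c m.1 :=
    Finset.sum_subtype _ (fun x => by simp [hp, Finset.mem_erase]) c
  rw [hsdef, hss]
lemma map_eq_pi_exp {Ω ι : Type*} [MeasurableSpace Ω] [Fintype ι] (μ : Measure Ω)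
    [IsProbabilityMeasure μ] (f : ι → Ω → ℝ) (hf : ∀ i, Measurable (f i))
    (hind : iIndepFun f μ)
    (hmap : ∀ i, μ.map (f i) = expMeasure 1) :
    μ.map (fun ω i => f i ω) = Measure.pi (fun _ : ι => expMeasure 1) := by
  have hprob : IsProbabilityMeasure (expMeasure 1) := isProbabilityMeasure_expMeasure one_pos
  refine (Measure.pi_eq fun s hs => ?_).symm
  rw [Measure.map_apply (measurable_pi_lambda _ hf) (MeasurableSet.univ_pi hs)]
  have hpre : (fun ω i => f i ω) ⁻¹' Set.pi Set.univ s = ⋂ i, f i ⁻¹' s i := by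
    ext ω; simp [Set.mem_pi]
  rw [hpre]
  have h2 := (iIndepFun_iff_measure_inter_preimage_eq_mul.mp hind) Finset.univ
    (fun i _ => hs i)
  simp only [Finset.mem_univ, Set.iInter_true, Finset.prod_congr] at h2
  rw [h2]
  refine Finset.prod_congr rfl fun i _ => ?_
  rw [← Measure.map_apply (hf i) (hs i), hmap i]

end Aux

/-- **Joint lower bound from the proof of the list matching lemma.**
Under Gumbel-max list sampling, for every `j`,
`Pr[Y = j ∧ j ∈ {X 1, …, X K}] ≥ K / ∑ i (max (q i / q j) (p i / p j) + (K-1) * q i / q j)`. -/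
theorem list_matching_joint_bound
    {Ω : Type*} [MeasurableSpace Ω] (μ : Measure Ω) [IsProbabilityMeasure μ]
    (N K : ℕ) (hN : 0 < N) (hK : 0 < K)
    (p q : Fin N → ℝ) (hp : ∀ i, 0 < p i) (hq : ∀ i, 0 < q i)
    (hpsum : ∑ i, p i = 1) (hqsum : ∑ i, q i = 1)
    (S : Fin N → Fin K → Ω → ℝ) (hSmeas : ∀ i k, Measurable (S i k))
    (hSindep : iIndepFun
      (fun ik : Fin N × Fin K => S ik.1 ik.2) μ)
    (hSexp : ∀ i k, μ.map (S i k) = expMeasure 1)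
    (Y : Ω → Fin N) (hYmeas : Measurable Y)
    (X : Fin K → Ω → Fin N) (hXmeas : ∀ k, Measurable (X k))
    -- `Y` is a.s. the unique argmin of `i ↦ (min_k S i k) / q i`
    (hY : ∀ᵐ ω ∂μ, ∀ i : Fin N, i ≠ Y ω →
      (⨅ k : Fin K, S (Y ω) k ω) / q (Y ω) < (⨅ k : Fin K, S i k ω) / q i)
    -- each `X k` is a.s. the unique argmin of `i ↦ S i k / p i`
    (hX : ∀ᵐ ω ∂μ, ∀ k : Fin K, ∀ i : Fin N, i ≠ X k ω →
      S (X k ω) k ω / p (X k ω) < S i k ω / p i)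
    : ∀ j : Fin N,
      ENNReal.ofReal ((K : ℝ) /
          ∑ i : Fin N, (max (q i / q j) (p i / p j) + ((K : ℝ) - 1) * (q i / q j)))
        ≤ μ {ω | Y ω = j ∧ ∃ k : Fin K, X k ω = j} := by
  intro j
  classical
  haveI : Nonempty (Fin K) := ⟨⟨0, hK⟩⟩
  have hprob : IsProbabilityMeasure (expMeasure 1) := isProbabilityMeasure_expMeasure one_pos
  set c : Fin K → Fin N × Fin K → ℝ := fun k m =>
    if m.2 = k then max (q m.1 / q j) (p m.1 / p j) else q m.1 / q j with hc
  have hcnonneg : ∀ k m, 0 ≤ c k m := by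
    intro k m
    by_cases h : m.2 = k
    · simp only [hc, if_pos h]
      exact le_max_of_le_left (le_of_lt (div_pos (hq m.1) (hq j)))
    · simp only [hc, if_neg h]
      exact le_of_lt (div_pos (hq m.1) (hq j))
  set D : ℝ := ∑ i : Fin N, (max (q i / q j) (p i / p j) + ((K : ℝ) - 1) * (q i / q j)) with hD
  set g : Ω → (Fin N × Fin K) → ℝ := fun ω m => S m.1 m.2 ω with hg
  have hgmeas : Measurable g := measurable_pi_lambda _ fun m => hSmeas m.1 m.2
  set A : Fin K → Set ((Fin N × Fin K) → ℝ) := fun k =>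
    {x | 0 ≤ x (j, k) ∧ ∀ m, m ≠ (j, k) → c k m * x (j, k) < x m} with hA
  have hAmeas : ∀ k, MeasurableSet (A k) := by
    intro k
    apply MeasurableSet.inter
    · exact measurableSet_le measurable_const (measurable_pi_apply _)
    · show MeasurableSet {x : (Fin N × Fin K) → ℝ | ∀ m, m ≠ (j, k) → c k m * x (j, k) < x m}
      rw [Set.setOf_forall]
      refine MeasurableSet.iInter fun m => ?_
      by_cases hm : m = (j, k)
      · simp [hm]
      · have : {x : (Fin N × Fin K) → ℝ | m ≠ (j, k) → c k m * x (j, k) < x m}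
            = {x | c k m * x (j, k) < x m} := by ext x; simp [hm]
        rw [this]
        exact measurableSet_lt ((measurable_pi_apply _).const_mul _) (measurable_pi_apply m)
  set E : Fin K → Set Ω := fun k => g ⁻¹' A k with hE
  have hEmeas : ∀ k, MeasurableSet (E k) := fun k => hgmeas (hAmeas k)
  have hmap := map_eq_pi_exp μ (fun m : Fin N × Fin K => S m.1 m.2)
    (fun m => hSmeas m.1 m.2) hSindep (fun m => hSexp m.1 m.2)
  -- measure of each event
  have hEk : ∀ k, μ (E k) = ENNReal.ofReal (1 / D) := by
    intro k
    have h1 : μ (E k) = (μ.map g) (A k) := (Measure.map_apply hgmeas (hAmeas k)).symm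
    rw [h1, hmap, race_lemma (j, k) (c k) (hcnonneg k)]
    congr 2
    have hckjk : c k (j, k) = 1 := by
      by_cases h : k = k
      · simp only [hc, if_pos h, div_self (hq j).ne', div_self (hp j).ne', max_self]
      · exact absurd rfl h
    have h2 : c k (j, k) + ∑ m ∈ Finset.univ.erase (j, k), c k m = ∑ m, c k m :=
      Finset.add_sum_erase _ _ (Finset.mem_univ _)
    rw [hckjk] at h2
    rw [h2, hD, Fintype.sum_prod_type]
    refine Finset.sum_congr rfl fun i _ => ?_
    have h3 : c k (i, k) + ∑ k' ∈ Finset.univ.erase k, c k (i, k')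
        = ∑ k', c k (i, k') :=
      Finset.add_sum_erase _ (fun k' => c k (i, k')) (Finset.mem_univ _)
    have h4 : c k (i, k) = max (q i / q j) (p i / p j) := by simp [hc]
    have h5 : ∑ k' ∈ Finset.univ.erase k, c k (i, k') = ((K : ℝ) - 1) * (q i / q j) := by
      rw [Finset.sum_congr rfl (fun k' hk' => by
        simp only [hc, if_neg (Finset.mem_erase.mp hk').1] : ∀ k' ∈ Finset.univ.erase k,
          c k (i, k') = q i / q j)]
      rw [Finset.sum_const, Finset.card_erase_of_mem (Finset.mem_univ _), Finset.card_univ,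
        Fintype.card_fin, nsmul_eq_mul]
      congr 1
      rw [Nat.cast_sub hK, Nat.cast_one]
    rw [← h3, h4, h5]
  -- disjointness
  have hdisj : Pairwise (Function.onFun Disjoint E) := by
    intro k k' hkk'
    rw [Function.onFun, Set.disjoint_left]
    intro ω h1 h2
    have h1' : 0 ≤ S j k ω ∧ ∀ m, m ≠ (j, k) → c k m * S j k ω < S m.1 m.2 ω := h1
    have h2' : 0 ≤ S j k' ω ∧ ∀ m, m ≠ (j, k') → c k' m * S j k' ω < S m.1 m.2 ω := h2
    have ha := h1'.2 (j, k') (by simp [Ne.symm hkk'])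
    have hb := h2'.2 (j, k) (by simp [hkk'])
    have hca : c k (j, k') = 1 := by
      simp only [hc, if_neg (Ne.symm hkk' : ¬ k' = k)]
      exact div_self (hq j).ne'
    have hcb : c k' (j, k) = 1 := by
      simp only [hc, if_neg (hkk' : ¬ k = k')]
      exact div_self (hq j).ne'
    rw [hca] at ha
    rw [hcb] at hb
    simp only [one_mul] at ha hb
    linarith
  have hunion : μ (⋃ k, E k) = ∑ k : Fin K, μ (E k) := by
    rw [measure_iUnion hdisj hEmeas, tsum_fintype]
  -- a.e. inclusion
  have hsub : ∀ᵐ ω ∂μ, ω ∈ (⋃ k, E k) → ω ∈ {ω | Y ω = j ∧ ∃ k : Fin K, X k ω = j} := by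
    filter_upwards [hY, hX] with ω hYω hXω hmem
    obtain ⟨k, hk⟩ := Set.mem_iUnion.mp hmem
    have hk' : 0 ≤ S j k ω ∧ ∀ m, m ≠ (j, k) → c k m * S j k ω < S m.1 m.2 ω := hk
    obtain ⟨hk0, hklt⟩ := hk'
    have key : ∀ i : Fin N, i ≠ j → ∀ k' : Fin K, S j k ω / q j < S i k' ω / q i := by
      intro i hi k'
      have hm : (i, k') ≠ (j, k) := fun h => hi (congrArg Prod.fst h)
      have h1 := hklt (i, k') hm
      have h2 : q i / q j ≤ c k (i, k') := by
        by_cases h : k' = k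
        · simp only [hc, if_pos h]
          exact le_max_left _ _
        · simp [hc, h]
      have h3 : q i / q j * S j k ω < S i k' ω :=
        lt_of_le_of_lt (mul_le_mul_of_nonneg_right h2 hk0) h1
      rw [div_lt_div_iff₀ (hq j) (hq i)]
      have h4 : q i / q j * S j k ω * q j < S i k' ω * q j :=
        mul_lt_mul_of_pos_right h3 (hq j)
      have h5 : q i / q j * S j k ω * q j = S j k ω * q i := by
        rw [mul_comm (q i / q j) (S j k ω), mul_assoc, div_mul_cancel₀ _ (hq j).ne']
      linarith
    have hYj : Y ω = j := by
      by_contra hne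
      have h6 := hYω j (fun h => hne h.symm)
      have h7 : (⨅ k' : Fin K, S j k' ω) / q j ≤ S j k ω / q j := by
        gcongr
        · exact (hq j).le
        · exact ciInf_le (Finite.bddBelow_range _) k
      have h8 : S j k ω / q j ≤ (⨅ k' : Fin K, S (Y ω) k' ω) / q (Y ω) := by
        rw [le_div_iff₀ (hq (Y ω))]
        refine le_ciInf fun k' => ?_
        have h9 := key (Y ω) hne k'
        exact le_of_lt ((lt_div_iff₀ (hq (Y ω))).mp h9)
      linarith
    have hXkj : X k ω = j := by
      by_contra hne
      have h6 := hXω k j (fun h => hne h.symm)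
      have hm : (X k ω, k) ≠ (j, k) := fun h => hne (congrArg Prod.fst h)
      have h1 := hklt (X k ω, k) hm
      have h2 : p (X k ω) / p j ≤ c k (X k ω, k) := by
        simp only [hc, if_pos rfl]
        exact le_max_right _ _
      have h3 : p (X k ω) / p j * S j k ω < S (X k ω) k ω :=
        lt_of_le_of_lt (mul_le_mul_of_nonneg_right h2 hk0) h1
      have h4 : S j k ω / p j < S (X k ω) k ω / p (X k ω) := by
        rw [div_lt_div_iff₀ (hp j) (hp (X k ω))]
        have h4' : p (X k ω) / p j * S j k ω * p j < S (X k ω) k ω * p j :=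
          mul_lt_mul_of_pos_right h3 (hp j)
        have h5 : p (X k ω) / p j * S j k ω * p j = S j k ω * p (X k ω) := by
          rw [mul_comm (p (X k ω) / p j) (S j k ω), mul_assoc, div_mul_cancel₀ _ (hp j).ne']
        linarith
      linarith
    exact ⟨hYj, ⟨k, hXkj⟩⟩
  -- conclusion
  have hle : μ (⋃ k, E k) ≤ μ {ω | Y ω = j ∧ ∃ k : Fin K, X k ω = j} :=
    measure_mono_ae hsub
  rw [hunion] at hle
  simp only [hEk] at hle
  rw [Finset.sum_const, Finset.card_univ, Fintype.card_fin, nsmul_eq_mul] at hle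
  refine le_trans (le_of_eq ?_) hle
  rw [div_eq_mul_one_div, ENNReal.ofReal_mul (by positivity : (0:ℝ) ≤ (K:ℝ)),
    ENNReal.ofReal_natCast]
end

section
/- Relaxed list matching bound: under Gumbel-max list sampling, the matching probability satisfies Pr[Y ∈ {X^(1), …, X^(K)}] ≥ Σ_{j=1}^{N} q_j · ( 1 + q_j/(K·p_j) )^{−1}. -/
open MeasureTheory ProbabilityTheory

namespace GLSaux

open Real Set
open scoped ENNReal

lemma expMeasure_apply (r : ℝ) {s : Set ℝ} (hs : MeasurableSet s) :
    expMeasure r s = ∫⁻ x in s, exponentialPDF r x := by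
  rw [expMeasure, gammaMeasure, withDensity_apply _ hs]; rfl

lemma expMeasure_Iic {r : ℝ} (hr : 0 < r) (a : ℝ) :
    expMeasure r (Iic a) = ENNReal.ofReal (if 0 ≤ a then 1 - rexp (-(r * a)) else 0) := by
  rw [expMeasure_apply r measurableSet_Iic]
  exact lintegral_exponentialPDF_eq_antiDeriv hr a

lemma expMeasure_Iic_nonpos {r : ℝ} (hr : 0 < r) {a : ℝ} (ha : a ≤ 0) :
    expMeasure r (Iic a) = 0 := by
  rw [expMeasure_Iic hr a]
  split_ifs with h
  · have : a = 0 := le_antisymm ha h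
    simp [this]
  · simp

lemma expMeasure_Ioi (a : ℝ) :
    expMeasure 1 (Ioi a) = min (ENNReal.ofReal (rexp (-a))) 1 := by
  haveI : IsProbabilityMeasure (expMeasure (1:ℝ)) := isProbabilityMeasure_expMeasure one_pos
  rw [← compl_Iic, prob_compl_eq_one_sub measurableSet_Iic]
  rcases le_total a 0 with ha | ha
  · rw [expMeasure_Iic_nonpos one_pos ha, tsub_zero]
    have h1 : (1:ℝ) ≤ rexp (-a) := Real.one_le_exp (by linarith)
    rw [min_eq_right (ENNReal.one_le_ofReal.2 h1)]
  · rw [expMeasure_Iic one_pos a, if_pos ha]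
    have he : rexp (-(1 * a)) ≤ 1 := Real.exp_le_one_iff.2 (by linarith)
    rw [show (1:ℝ≥0∞) = ENNReal.ofReal 1 by norm_num, ← ENNReal.ofReal_sub 1 (by linarith),
      min_eq_left (ENNReal.ofReal_le_ofReal (by rw [one_mul] at he; linarith))]
    norm_num


variable {Om : Type*} [MeasurableSpace Om] {iota : Type*} [Fintype iota]

lemma map_pi (mu : Measure Om) (Z : iota → Om → ℝ) (hZ : ∀ l, Measurable (Z l))
    (hind : iIndepFun Z mu)
    (hexp : ∀ l, mu.map (Z l) = expMeasure 1) :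
    mu.map (fun ω l => Z l ω) = Measure.pi (fun _ => expMeasure 1) := by
  haveI : IsProbabilityMeasure (expMeasure (1:ℝ)) := isProbabilityMeasure_expMeasure one_pos
  refine (Measure.pi_eq fun s hs => ?_).symm
  rw [Measure.map_apply (measurable_pi_lambda _ hZ) (MeasurableSet.univ_pi hs)]
  have hpre : (fun ω l => Z l ω) ⁻¹' (Set.pi Set.univ s) = ⋂ l ∈ Finset.univ, Z l ⁻¹' s l := by
    ext ω; simp [Set.mem_univ_pi]
  rw [hpre, hind.measure_inter_preimage_eq_mul Finset.univ (fun l _ => hs l)]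
  exact Finset.prod_congr rfl fun l _ => by rw [← hexp l, Measure.map_apply (hZ l) (hs l)]

lemma pi_race [DecidableEq iota] (l0 : iota) (c : iota → ℝ) (hc : ∀ l, 0 ≤ c l)
    (hc0 : c l0 = 0) :
    Measure.pi (fun _ : iota => expMeasure 1) {x | ∀ l, l ≠ l0 → c l * x l0 < x l}
      = ENNReal.ofReal (1 + ∑ l, c l)⁻¹ := by
  haveI : IsProbabilityMeasure (expMeasure (1:ℝ)) := isProbabilityMeasure_expMeasure one_pos
  classical
  set p : iota → Prop := fun l => l = l0 with hp
  letI : Unique {l // p l} := ⟨⟨⟨l0, rfl⟩⟩, fun a => Subtype.ext a.2⟩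
  have h1 := MeasureTheory.measurePreserving_funUnique (expMeasure 1) {l // p l}
  have hfe : (Unique.fintype : Fintype {l // p l}) = Subtype.fintype p :=
    Subsingleton.elim _ _
  rw [hfe] at h1
  have h2 := MeasureTheory.measurePreserving_piEquivPiSubtypeProd
    (fun _ : iota => expMeasure 1) p
  have h3 := (h1.prod (MeasurePreserving.id
      (Measure.pi fun _ : {l // ¬ p l} => expMeasure 1))).comp h2
  set B : Set (ℝ × ({l // ¬ p l} → ℝ)) := {z | ∀ l : {l // ¬ p l}, c ↑l * z.1 < z.2 l} with hB
  have hBmeas : MeasurableSet B := by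
    have hBi : B = ⋂ l : {l // ¬ p l}, {z : ℝ × ({l // ¬ p l} → ℝ) | c ↑l * z.1 < z.2 l} := by
      ext z; simp [hB]
    rw [hBi]
    exact MeasurableSet.iInter fun l => measurableSet_lt
      (measurable_fst.const_mul _) ((measurable_pi_apply l).comp measurable_snd)
  have hpre : (Prod.map (⇑(MeasurableEquiv.funUnique {l // p l} ℝ)) id ∘
      ⇑(MeasurableEquiv.piEquivPiSubtypeProd (fun _ : iota => ℝ) p)) ⁻¹' B
      = {x : iota → ℝ | ∀ l, l ≠ l0 → c l * x l0 < x l} := by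
    ext x
    simp only [Set.mem_preimage, Function.comp_apply, Prod.map, hB, Set.mem_setOf_eq,
      MeasurableEquiv.funUnique, MeasurableEquiv.piEquivPiSubtypeProd,
      MeasurableEquiv.piUnique, Equiv.piUnique,
      Equiv.funUnique, Equiv.piEquivPiSubtypeProd, MeasurableEquiv.coe_mk, Equiv.coe_fn_mk,
      id_eq]
    exact ⟨fun h l hl => h ⟨l, hl⟩, fun h l => h ↑l l.2⟩
  rw [← hpre, ← Measure.map_apply h3.measurable hBmeas, h3.map_eq,
    Measure.prod_apply hBmeas]
  have key : ∀ t : ℝ, (Measure.pi fun _ : {l // ¬ p l} => expMeasure 1) (Prod.mk t ⁻¹' B)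
      = ∏ l : {l // ¬ p l}, min (ENNReal.ofReal (rexp (-(c ↑l * t)))) 1 := by
    intro t
    have hslice : (Prod.mk t ⁻¹' B)
        = Set.pi Set.univ (fun l : {l // ¬ p l} => Ioi (c ↑l * t)) := by
      ext v; simp [hB]
    rw [hslice, Measure.pi_pi]
    exact Finset.prod_congr rfl fun l _ => expMeasure_Ioi _
  rw [lintegral_congr key]
  set G := fun t : ℝ => ∏ l : {l // ¬ p l}, min (ENNReal.ofReal (rexp (-(c ↑l * t)))) 1 with hG
  have hGmeas : Measurable G := by
    refine Finset.measurable_prod _ fun l _ => Measurable.min ?_ measurable_const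
    exact ENNReal.measurable_ofReal.comp
      (Real.measurable_exp.comp ((measurable_const.mul measurable_id).neg))
  have hpdf : Measurable (exponentialPDF 1) := (measurable_exponentialPDFReal 1).ennreal_ofReal
  have hem : expMeasure 1 = volume.withDensity (exponentialPDF 1) := rfl
  rw [hem, lintegral_withDensity_eq_lintegral_mul _ hpdf hGmeas]
  set C := ∑ l : {l // ¬ p l}, (c ↑l : ℝ) with hC
  have hC0 : 0 ≤ C := Finset.sum_nonneg fun l _ => hc _
  have h1C : (0:ℝ) < 1 + C := by linarith
  have hCsum : (1:ℝ) + ∑ l, c l = 1 + C := by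
    have hsplit : ∑ l, c l = C := by
      have hCf : C = ∑ l ∈ Finset.univ.filter (fun l => ¬ p l), c l :=
        (Finset.sum_subtype _ (fun x => by simp) c).symm
      rw [hCf, ← Finset.sum_filter_add_sum_filter_not Finset.univ (fun l => ¬ p l) c]
      have : Finset.univ.filter (fun l => ¬ ¬ p l) = {l0} := by
        ext l; simp [hp, not_not]
      rw [this, Finset.sum_singleton, hc0, add_zero]
    rw [hsplit]
  have hpoint : ∀ t, (exponentialPDF 1 * G) t
      = ENNReal.ofReal (1 + C)⁻¹ * exponentialPDF (1 + C) t := by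
    intro t
    rcases lt_or_ge t 0 with ht | ht
    · simp [Pi.mul_apply, exponentialPDF_of_neg ht]
    · simp only [Pi.mul_apply, hG]
      rw [exponentialPDF_of_nonneg ht, exponentialPDF_of_nonneg ht]
      have hmin : ∀ l : {l // ¬ p l}, min (ENNReal.ofReal (rexp (-(c ↑l * t)))) 1
          = ENNReal.ofReal (rexp (-(c ↑l * t))) := fun l =>
        min_eq_left (ENNReal.ofReal_le_one.2 (Real.exp_le_one_iff.2
          (neg_nonpos.2 (mul_nonneg (hc _) ht))))
      rw [Finset.prod_congr rfl fun l _ => hmin l,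
        ← ENNReal.ofReal_prod_of_nonneg (fun l _ => (Real.exp_pos _).le),
        ← Real.exp_sum, ← ENNReal.ofReal_mul (by positivity),
        ← ENNReal.ofReal_mul (by positivity)]
      congr 1
      have hsum : ∑ l : {l // ¬ p l}, -(c ↑l * t) = -(C * t) := by
        rw [hC, Finset.sum_mul, ← Finset.sum_neg_distrib]
      rw [hsum, inv_mul_cancel_left₀ h1C.ne', one_mul, ← Real.exp_add]
      congr 1; ring
  have hpdf2 : Measurable (exponentialPDF (1 + C)) :=
    (measurable_exponentialPDFReal (1 + C)).ennreal_ofReal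
  rw [lintegral_congr hpoint, lintegral_const_mul _ hpdf2,
    lintegral_exponentialPDF_eq_one h1C, mul_one, hCsum]


lemma race_prob [DecidableEq iota] (mu : Measure Om) (Z : iota → Om → ℝ)
    (hZ : ∀ l, Measurable (Z l))
    (hind : iIndepFun Z mu)
    (hexp : ∀ l, mu.map (Z l) = expMeasure 1)
    (l0 : iota) (c : iota → ℝ) (hc : ∀ l, 0 ≤ c l) (hc0 : c l0 = 0) :
    mu {ω | ∀ l, l ≠ l0 → c l * Z l0 ω < Z l ω} = ENNReal.ofReal (1 + ∑ l, c l)⁻¹ := by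
  have hAmeas : MeasurableSet {x : iota → ℝ | ∀ l, l ≠ l0 → c l * x l0 < x l} := by
    have hAi : {x : iota → ℝ | ∀ l, l ≠ l0 → c l * x l0 < x l}
        = ⋂ l, {x : iota → ℝ | l ≠ l0 → c l * x l0 < x l} := by ext x; simp
    rw [hAi]
    refine MeasurableSet.iInter fun l => ?_
    by_cases hl : l = l0
    · simp [hl]
    · have : {x : iota → ℝ | l ≠ l0 → c l * x l0 < x l} = {x | c l * x l0 < x l} := by
        ext x; simp [hl]
      rw [this]
      exact measurableSet_lt ((measurable_pi_apply l0).const_mul _) (measurable_pi_apply l)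
  have hset : {ω | ∀ l, l ≠ l0 → c l * Z l0 ω < Z l ω}
      = (fun ω l => Z l ω) ⁻¹' {x | ∀ l, l ≠ l0 → c l * x l0 < x l} := rfl
  rw [hset, ← Measure.map_apply (measurable_pi_lambda _ hZ) hAmeas,
    map_pi mu Z hZ hind hexp, pi_race l0 c hc hc0]

end GLSaux

open GLSaux

/-- **Relaxed list matching bound.**
Under Gumbel-max list sampling,
`Pr[Y ∈ {X 1, …, X K}] ≥ ∑ j, q j * (1 + q j / (K * p j))⁻¹`. -/
theorem list_matching_lemma_relaxed
    {Ω : Type*} [MeasurableSpace Ω] (μ : Measure Ω) [IsProbabilityMeasure μ]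
    (N K : ℕ) (hN : 0 < N) (hK : 0 < K)
    (p q : Fin N → ℝ) (hp : ∀ i, 0 < p i) (hq : ∀ i, 0 < q i)
    (hpsum : ∑ i, p i = 1) (hqsum : ∑ i, q i = 1)
    (S : Fin N → Fin K → Ω → ℝ) (hSmeas : ∀ i k, Measurable (S i k))
    (hSindep : iIndepFun
      (fun ik : Fin N × Fin K => S ik.1 ik.2) μ)
    (hSexp : ∀ i k, μ.map (S i k) = expMeasure 1)
    (Y : Ω → Fin N) (hYmeas : Measurable Y)
    (X : Fin K → Ω → Fin N) (hXmeas : ∀ k, Measurable (X k))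
    -- `Y` is a.s. the unique argmin of `i ↦ (min_k S i k) / q i`
    (hY : ∀ᵐ ω ∂μ, ∀ i : Fin N, i ≠ Y ω →
      (⨅ k : Fin K, S (Y ω) k ω) / q (Y ω) < (⨅ k : Fin K, S i k ω) / q i)
    -- each `X k` is a.s. the unique argmin of `i ↦ S i k / p i`
    (hX : ∀ᵐ ω ∂μ, ∀ k : Fin K, ∀ i : Fin N, i ≠ X k ω →
      S (X k ω) k ω / p (X k ω) < S i k ω / p i)
    : ENNReal.ofReal (∑ j : Fin N, q j * (1 + q j / ((K : ℝ) * p j))⁻¹)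
      ≤ μ {ω | ∃ k : Fin K, X k ω = Y ω} := by
  classical
  haveI : Nonempty (Fin K) := ⟨⟨0, hK⟩⟩
  have hq1 : ∀ j, q j ≤ 1 := fun j =>
    hqsum ▸ Finset.single_le_sum (fun i _ => (hq i).le) (Finset.mem_univ j)
  have hp1 : ∀ j, p j ≤ 1 := fun j =>
    hpsum ▸ Finset.single_le_sum (fun i _ => (hp i).le) (Finset.mem_univ j)
  have hKpos : (0:ℝ) < K := by exact_mod_cast hK
  set c : Fin N → Fin K → (Fin N × Fin K) → ℝ := fun j m l =>
    if l.1 = j then (if l.2 = m then 0 else 1)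
    else q l.1 / q j + (if l.2 = m then p l.1 / p j else 0) with hcdef
  have hcnn : ∀ j m l, 0 ≤ c j m l := by
    intro j m l
    have h1 : (0:ℝ) ≤ q l.1 / q j := div_nonneg (hq _).le (hq _).le
    have h2 : (0:ℝ) ≤ p l.1 / p j := div_nonneg (hp _).le (hp _).le
    simp only [hcdef]
    split_ifs <;> linarith
  have hc0 : ∀ j m, c j m (j, m) = 0 := by intro j m; simp [hcdef]
  set P : Set Ω := {ω | ∀ l : Fin N × Fin K, 0 < S l.1 l.2 ω} with hPdef
  have hPmeas : MeasurableSet P := by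
    have hPi : P = ⋂ l : Fin N × Fin K, {ω | 0 < S l.1 l.2 ω} := by ext ω; simp [hPdef]
    rw [hPi]
    exact MeasurableSet.iInter fun l => measurableSet_lt measurable_const (hSmeas l.1 l.2)
  have hPc : μ Pᶜ = 0 := by
    have hsub : Pᶜ ⊆ ⋃ l : Fin N × Fin K, S l.1 l.2 ⁻¹' Set.Iic 0 := by
      intro ω hω
      simp only [hPdef, Set.mem_compl_iff, Set.mem_setOf_eq, not_forall, not_lt] at hω
      obtain ⟨l, hl⟩ := hω
      exact Set.mem_iUnion.2 ⟨l, hl⟩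
    refine measure_mono_null hsub (measure_iUnion_null fun l => ?_)
    rw [← Measure.map_apply (hSmeas l.1 l.2) measurableSet_Iic, hSexp l.1 l.2]
    exact expMeasure_Iic_nonpos one_pos le_rfl
  set D : Fin N × Fin K → Set Ω := fun n =>
    {ω | ∀ l, l ≠ n → c n.1 n.2 l * S n.1 n.2 ω < S l.1 l.2 ω} with hDdef
  set E : Fin N × Fin K → Set Ω := fun n => D n ∩ P with hEdef
  have hDmeas : ∀ n, MeasurableSet (D n) := by
    intro n
    have hDi : D n = ⋂ l, {ω | l ≠ n → c n.1 n.2 l * S n.1 n.2 ω < S l.1 l.2 ω} := by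
      ext ω; simp [hDdef]
    rw [hDi]
    refine MeasurableSet.iInter fun l => ?_
    by_cases hl : l = n
    · simp [hl]
    · have he : {ω | l ≠ n → c n.1 n.2 l * S n.1 n.2 ω < S l.1 l.2 ω}
          = {ω | c n.1 n.2 l * S n.1 n.2 ω < S l.1 l.2 ω} := by ext ω; simp [hl]
      rw [he]
      exact measurableSet_lt ((hSmeas n.1 n.2).const_mul _) (hSmeas l.1 l.2)
  have hEmeas : ∀ n, MeasurableSet (E n) := by
    intro n; simp only [hEdef]; exact (hDmeas n).inter hPmeas
  have hDval : ∀ n : Fin N × Fin K,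
      μ (D n) = ENNReal.ofReal (1 + ∑ l, c n.1 n.2 l)⁻¹ := by
    intro n
    have h := race_prob μ (fun l : Fin N × Fin K => S l.1 l.2) (fun l => hSmeas l.1 l.2)
      hSindep (fun l => hSexp l.1 l.2) n (c n.1 n.2) (hcnn n.1 n.2)
      (by rcases n with ⟨j, m⟩; exact hc0 j m)
    simp only [hDdef]
    exact h
  have hEval : ∀ n, μ (E n) = ENNReal.ofReal (1 + ∑ l, c n.1 n.2 l)⁻¹ := by
    intro n
    simp only [hEdef]
    rw [measure_inter_conull hPc]
    exact hDval n
  have hdisj : Pairwise (Function.onFun Disjoint E) := by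
    intro a b hab
    refine Set.disjoint_left.2 fun ω ha hb => ?_
    simp only [hEdef, hDdef, hPdef, Set.mem_inter_iff, Set.mem_setOf_eq] at ha hb
    obtain ⟨hDa, hPa⟩ := ha
    obtain ⟨hDb, _⟩ := hb
    have h1 := hDa b (Ne.symm hab)
    have h2 := hDb a hab
    have hSa : 0 < S a.1 a.2 ω := hPa a
    have hSb : 0 < S b.1 b.2 ω := hPa b
    by_cases hj : a.1 = b.1
    · have hm : a.2 ≠ b.2 := fun h2' => hab (Prod.ext_iff.2 ⟨hj, h2'⟩)
      have e1 : c a.1 a.2 b = 1 := by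
        simp only [hcdef]
        rw [if_pos hj.symm, if_neg (fun h => hm h.symm)]
      have e2 : c b.1 b.2 a = 1 := by
        simp only [hcdef]
        rw [if_pos hj, if_neg hm]
      rw [e1, one_mul] at h1
      rw [e2, one_mul] at h2
      linarith
    · have hr1 : q b.1 / q a.1 ≤ c a.1 a.2 b := by
        have h0 : (0:ℝ) ≤ if b.2 = a.2 then p b.1 / p a.1 else 0 := by
          split_ifs
          exacts [div_nonneg (hp _).le (hp _).le, le_rfl]
        simp only [hcdef]
        rw [if_neg (fun h => hj h.symm)]
        linarith
      have hr2 : q a.1 / q b.1 ≤ c b.1 b.2 a := by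
        have h0 : (0:ℝ) ≤ if a.2 = b.2 then p a.1 / p b.1 else 0 := by
          split_ifs
          exacts [div_nonneg (hp _).le (hp _).le, le_rfl]
        simp only [hcdef]
        rw [if_neg hj]
        linarith
      have hg1 : q b.1 / q a.1 * S a.1 a.2 ω < S b.1 b.2 ω :=
        lt_of_le_of_lt (mul_le_mul_of_nonneg_right hr1 hSa.le) h1
      have hg2 : q a.1 / q b.1 * S b.1 b.2 ω < S a.1 a.2 ω :=
        lt_of_le_of_lt (mul_le_mul_of_nonneg_right hr2 hSb.le) h2
      have hprod : q b.1 / q a.1 * (q a.1 / q b.1) = 1 := by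
        rw [div_mul_div_comm, mul_comm (q b.1) (q a.1)]
        exact div_self (mul_pos (hq a.1) (hq b.1)).ne'
      have hpos1 : 0 < q b.1 / q a.1 := div_pos (hq _) (hq _)
      have h5 := mul_lt_mul_of_pos_left hg2 hpos1
      rw [← mul_assoc, hprod, one_mul] at h5
      linarith
  have hsumc : ∀ (j : Fin N) (m : Fin K), (1:ℝ) + ∑ l : Fin N × Fin K, c j m l
      = K / q j + (1 - p j) / p j := by
    intro j m
    have hinner : ∀ i : Fin N, ∑ k : Fin K, c j m (i, k)
        = if i = j then (K:ℝ) - 1 else K * (q i / q j) + p i / p j := by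
      intro i
      by_cases hi : i = j
      · rw [if_pos hi]
        subst hi
        have hterm : ∀ k : Fin K, c i m (i, k) = 1 - (if k = m then (1:ℝ) else 0) := by
          intro k
          simp only [hcdef]
          rw [if_pos trivial]
          split_ifs <;> norm_num
        rw [Finset.sum_congr rfl fun k _ => hterm k, Finset.sum_sub_distrib,
          Finset.sum_const, Finset.card_univ, Fintype.card_fin,
          Finset.sum_ite_eq' Finset.univ m fun _ => (1:ℝ)]
        simp [nsmul_eq_mul]
      · rw [if_neg hi]
        have hterm : ∀ k : Fin K, c j m (i, k)
            = q i / q j + (if k = m then p i / p j else 0) := by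
          intro k
          simp only [hcdef]
          rw [if_neg hi]
        rw [Finset.sum_congr rfl fun k _ => hterm k, Finset.sum_add_distrib,
          Finset.sum_const, Finset.card_univ, Fintype.card_fin,
          Finset.sum_ite_eq' Finset.univ m fun _ => p i / p j]
        simp [nsmul_eq_mul]
    rw [Fintype.sum_prod_type, Finset.sum_congr rfl fun i _ => hinner i,
      ← Finset.add_sum_erase Finset.univ _ (Finset.mem_univ j), if_pos rfl]
    have herase : ∑ i ∈ Finset.univ.erase j,
        (if i = j then (K:ℝ) - 1 else K * (q i / q j) + p i / p j)
        = ∑ i ∈ Finset.univ.erase j, (K * (q i / q j) + p i / p j) :=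
      Finset.sum_congr rfl fun i hi => if_neg (Finset.ne_of_mem_erase hi)
    have hqe : ∑ i ∈ Finset.univ.erase j, q i = 1 - q j := by
      have h := Finset.add_sum_erase Finset.univ q (Finset.mem_univ j)
      rw [hqsum] at h
      linarith
    have hpe : ∑ i ∈ Finset.univ.erase j, p i = 1 - p j := by
      have h := Finset.add_sum_erase Finset.univ p (Finset.mem_univ j)
      rw [hpsum] at h
      linarith
    rw [herase, Finset.sum_add_distrib]
    have hA : ∑ i ∈ Finset.univ.erase j, K * (q i / q j) = K * ((1 - q j) / q j) := by
      rw [← Finset.mul_sum, ← Finset.sum_div, hqe]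
    have hB : ∑ i ∈ Finset.univ.erase j, p i / p j = (1 - p j) / p j := by
      rw [← Finset.sum_div, hpe]
    rw [hA, hB]
    field_simp [(hq j).ne', (hp j).ne']
    ring
  have hperj : ∀ j : Fin N, q j * (1 + q j / ((K:ℝ) * p j))⁻¹
      ≤ K * (K / q j + (1 - p j) / p j)⁻¹ := by
    intro j
    have hqj := hq j
    have hpj := hp j
    have hrr : (0:ℝ) < q j / (K * p j) := div_pos hqj (mul_pos hKpos hpj)
    have hd1 : (0:ℝ) < 1 + q j / (K * p j) := by linarith
    have hd2 : (0:ℝ) < K / q j + (1 - p j) / p j := by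
      have ha : (0:ℝ) ≤ (1 - p j) / p j := div_nonneg (by linarith [hp1 j]) hpj.le
      have hb : (0:ℝ) < K / q j := div_pos hKpos hqj
      linarith
    rw [← div_eq_mul_inv, ← div_eq_mul_inv, div_le_div_iff₀ hd1 hd2]
    have hexp : q j * (K / q j + (1 - p j) / p j) = K + q j / p j - q j := by
      field_simp
      ring
    have hexp2 : K * (1 + q j / (K * p j)) = K + q j / p j := by
      field_simp
    rw [hexp, hexp2]
    linarith
  have hsubs : (⋃ n, E n) ≤ᵐ[μ] {ω | ∃ k : Fin K, X k ω = Y ω} := by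
    filter_upwards [hY, hX] with ω hYω hXω hmem
    obtain ⟨n, hn⟩ := Set.mem_iUnion.1 hmem
    simp only [hEdef, hDdef, hPdef, Set.mem_inter_iff, Set.mem_setOf_eq] at hn
    obtain ⟨hDn, hPn⟩ := hn
    obtain ⟨j, m⟩ := n
    have hpos : 0 < S j m ω := hPn (j, m)
    have hYj : Y ω = j := by
      by_contra hne
      have hne' : j ≠ Y ω := fun h => hne h.symm
      have hlt := hYω j hne'
      have hlow : ∀ k : Fin K, q (Y ω) / q j * S j m ω ≤ S (Y ω) k ω := by
        intro k
        have hnae : ((Y ω), k) ≠ (j, m) := fun h => hne (congrArg Prod.fst h)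
        have hd := hDn ((Y ω), k) hnae
        have hge : q (Y ω) / q j ≤ c j m ((Y ω), k) := by
          have h0 : (0:ℝ) ≤ if k = m then p (Y ω) / p j else 0 := by
            split_ifs
            exacts [div_nonneg (hp _).le (hp _).le, le_rfl]
          simp only [hcdef]
          rw [if_neg hne]
          linarith
        have h6 := mul_le_mul_of_nonneg_right hge hpos.le
        linarith
      have h1 : q (Y ω) / q j * S j m ω ≤ ⨅ k : Fin K, S (Y ω) k ω := le_ciInf hlow
      have h2 : (⨅ k : Fin K, S j k ω) ≤ S j m ω :=
        ciInf_le (Set.Finite.bddBelow (Set.finite_range _)) m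
      have h3 : S j m ω / q j ≤ (⨅ k : Fin K, S (Y ω) k ω) / q (Y ω) := by
        rw [div_le_div_iff₀ (hq j) (hq (Y ω))]
        have hh : q (Y ω) / q j * S j m ω * q j = S j m ω * q (Y ω) := by
          rw [div_mul_eq_mul_div, div_mul_eq_mul_div, div_eq_iff (hq j).ne']
          ring
        have h5 := mul_le_mul_of_nonneg_right h1 (hq j).le
        linarith
      have h4 : (⨅ k : Fin K, S j k ω) / q j ≤ S j m ω / q j :=
        (div_le_div_iff_of_pos_right (hq j)).2 h2
      linarith
    have hXm : X m ω = j := by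
      by_contra hne
      have hne' : j ≠ X m ω := fun h => hne h.symm
      have hlt := hXω m j hne'
      have hni : ((X m ω), m) ≠ (j, m) := fun h => hne (congrArg Prod.fst h)
      have hd := hDn ((X m ω), m) hni
      have hce : c j m ((X m ω), m) = q (X m ω) / q j + p (X m ω) / p j := by
        simp only [hcdef]
        rw [if_neg hne, if_pos trivial]
      rw [hce] at hd
      have h0 : (0:ℝ) ≤ q (X m ω) / q j := div_nonneg (hq _).le (hq _).le
      have h1 : p (X m ω) / p j * S j m ω < S (X m ω) m ω := by nlinarith
      have h2 : S j m ω / p j < S (X m ω) m ω / p (X m ω) := by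
        rw [div_lt_div_iff₀ (hp j) (hp (X m ω))]
        have hh : p (X m ω) / p j * S j m ω * p j = S j m ω * p (X m ω) := by
          rw [div_mul_eq_mul_div, div_mul_eq_mul_div, div_eq_iff (hp j).ne']
          ring
        have h5 := mul_lt_mul_of_pos_right h1 (hp j)
        linarith
      linarith
    exact ⟨m, hXm.trans hYj.symm⟩
  calc ENNReal.ofReal (∑ j : Fin N, q j * (1 + q j / ((K : ℝ) * p j))⁻¹)
      ≤ ENNReal.ofReal (∑ n : Fin N × Fin K, ((1:ℝ) + ∑ l, c n.1 n.2 l)⁻¹) := by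
        apply ENNReal.ofReal_le_ofReal
        rw [Fintype.sum_prod_type]
        have hcol : ∀ j : Fin N, ∑ m : Fin K, ((1:ℝ) + ∑ l, c j m l)⁻¹
            = K * (K / q j + (1 - p j) / p j)⁻¹ := by
          intro j
          rw [Finset.sum_congr rfl fun m _ => by rw [hsumc j m], Finset.sum_const,
            Finset.card_univ, Fintype.card_fin, nsmul_eq_mul]
        rw [Finset.sum_congr rfl fun j _ => hcol j]
        exact Finset.sum_le_sum fun j _ => hperj j
    _ = ∑ n : Fin N × Fin K, ENNReal.ofReal ((1:ℝ) + ∑ l, c n.1 n.2 l)⁻¹ :=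
        ENNReal.ofReal_sum_of_nonneg fun n _ => inv_nonneg.2
          (add_nonneg zero_le_one (Finset.sum_nonneg fun l _ => hcnn n.1 n.2 l))
    _ = ∑ n : Fin N × Fin K, μ (E n) := Finset.sum_congr rfl fun n _ => (hEval n).symm
    _ = μ (⋃ n, E n) := by rw [measure_iUnion hdisj hEmeas, tsum_fintype]
    _ ≤ μ {ω | ∃ k : Fin K, X k ω = Y ω} := measure_mono_ae hsubs
end

section
/- Exact matching probability for a single proposal (K = 1): with Y = argmin_{1≤i≤N} S_i/q_i and X = argmin_{1≤i≤N} S_i/p_i computed from the same exponential random variables, the matching probability is exactly Pr[Y = X] = Σ_{j=1}^{N} 1 / ( Σ_{i=1}^{N} max{ q_i/q_j , p_i/p_j } ). In particular, the list matching lemma's lower bound is tight when K = 1. -/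
open MeasureTheory ProbabilityTheory

section Aux
open Real Set

lemma measurable_gammaPDF (a r : ℝ) : Measurable (gammaPDF a r) :=
  ENNReal.measurable_ofReal.comp (measurable_gammaPDFReal a r)

lemma expMeasure_Iic (x : ℝ) :
    expMeasure 1 (Set.Iic x)
      = ENNReal.ofReal (if 0 ≤ x then 1 - Real.exp (-(1 * x)) else 0) := by
  rw [expMeasure, gammaMeasure, withDensity_apply _ measurableSet_Iic]
  exact lintegral_exponentialPDF_eq_antiDeriv one_pos x

lemma expMeasure_Iic_zero : expMeasure 1 (Set.Iic 0) = 0 := by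
  rw [expMeasure_Iic]; simp

lemma expMeasure_Ioi {a : ℝ} (ha : 0 ≤ a) :
    expMeasure 1 (Set.Ioi a) = ENNReal.ofReal (Real.exp (-a)) := by
  haveI : IsProbabilityMeasure (expMeasure 1) := isProbabilityMeasure_expMeasure one_pos
  rw [← compl_Iic, measure_compl measurableSet_Iic (measure_ne_top _ _), expMeasure_Iic,
    if_pos ha, measure_univ, one_mul]
  rw [← ENNReal.ofReal_one,
    ← ENNReal.ofReal_sub _ (sub_nonneg.mpr (Real.exp_le_one_iff.mpr (by linarith)))]
  norm_num

lemma lintegral_exp_decay {D : ℝ} (hD : 0 < D) :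
    ∫⁻ t in Set.Ioi (0:ℝ), ENNReal.ofReal (Real.exp (-(D * t))) = ENNReal.ofReal (1 / D) := by
  have hint : IntegrableOn (fun t : ℝ => Real.exp (-(D * t))) (Set.Ioi 0) := by
    simpa [neg_mul] using exp_neg_integrableOn_Ioi 0 hD
  rw [← MeasureTheory.ofReal_integral_eq_lintegral_ofReal hint
      (ae_of_all _ fun t => (Real.exp_pos _).le)]
  congr 1
  have h := Real.integral_rpow_mul_exp_neg_mul_Ioi (a := 1) one_pos hD
  simp only [sub_self, Real.rpow_zero, one_mul, Real.rpow_one, Real.Gamma_one, mul_one] at h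
  simpa using h

lemma pi_exp_event {n : ℕ} (j : Fin (n + 1)) (c : Fin (n + 1) → ℝ)
    (hc : ∀ i, 0 < c i) (hcj : c j = 1) :
    (Measure.pi fun _ : Fin (n + 1) => expMeasure 1)
        {x | 0 < x j ∧ ∀ i, i ≠ j → c i * x j < x i}
      = ENNReal.ofReal (1 / ∑ i, c i) := by
  haveI : IsProbabilityMeasure (expMeasure 1) := isProbabilityMeasure_expMeasure one_pos
  set e := MeasurableEquiv.piFinSuccAbove (fun _ : Fin (n + 1) => ℝ) j with he
  set U : Set (ℝ × (Fin n → ℝ)) :=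
    {z | 0 < z.1 ∧ ∀ k, c (j.succAbove k) * z.1 < z.2 k} with hU
  have hUmeas : MeasurableSet U := by
    have hU2 : U = {z : ℝ × (Fin n → ℝ) | 0 < z.1}
        ∩ ⋂ k, {z : ℝ × (Fin n → ℝ) | c (j.succAbove k) * z.1 < z.2 k} := by
      ext z; simp [hU]
    rw [hU2]
    exact (measurable_fst measurableSet_Ioi).inter (MeasurableSet.iInter fun k =>
      measurableSet_lt (measurable_fst.const_mul _) ((measurable_pi_apply k).comp measurable_snd))
  have hpre : e ⁻¹' U = {x | 0 < x j ∧ ∀ i, i ≠ j → c i * x j < x i} := by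
    ext x
    simp only [he, MeasurableEquiv.piFinSuccAbove_apply, Set.mem_preimage, hU,
      Set.mem_setOf_eq]
    refine and_congr_right fun _ => ⟨fun h i hi => ?_, fun h k => h _ (Fin.succAbove_ne j k)⟩
    · obtain ⟨k, hk⟩ := Fin.exists_succAbove_eq hi
      rw [← hk]; exact h k
  have hmp := measurePreserving_piFinSuccAbove (fun _ : Fin (n + 1) => expMeasure 1) j
  rw [← hpre, hmp.measure_preimage hUmeas.nullMeasurableSet]
  rw [Measure.prod_apply hUmeas]
  have hslice : ∀ t ∈ Set.Ioi (0:ℝ),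
      (Measure.pi fun _ : Fin n => expMeasure 1) (Prod.mk t ⁻¹' U)
        = ENNReal.ofReal (Real.exp (-((∑ k : Fin n, c (j.succAbove k)) * t))) := by
    intro t ht
    have : Prod.mk t ⁻¹' U = Set.pi Set.univ (fun k => Set.Ioi (c (j.succAbove k) * t)) := by
      ext y
      simp only [Set.mem_preimage, hU, Set.mem_setOf_eq, Set.mem_univ_pi, Set.mem_Ioi]
      exact and_iff_right ht
    rw [this, Measure.pi_pi]
    have : ∀ k : Fin n, expMeasure 1 (Set.Ioi (c (j.succAbove k) * t))
        = ENNReal.ofReal (Real.exp (-(c (j.succAbove k) * t))) := fun k =>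
      expMeasure_Ioi (mul_nonneg (hc _).le (le_of_lt ht))
    simp_rw [this]
    rw [← ENNReal.ofReal_prod_of_nonneg (fun k _ => (Real.exp_pos _).le), ← Real.exp_sum]
    congr 2
    rw [Finset.sum_neg_distrib, ← Finset.sum_mul]
  set C := ∑ k : Fin n, c (j.succAbove k) with hC
  set D := ∑ i, c i with hDdef
  have hD : D = 1 + C := by
    rw [hDdef, Fin.sum_univ_succAbove c j, hcj, hC]
  have hDpos : 0 < D := by
    rw [hD]
    have : 0 ≤ C := Finset.sum_nonneg fun k _ => (hc _).le
    linarith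
  have hsplit : ∫⁻ t, (Measure.pi fun _ : Fin n => expMeasure 1) (Prod.mk t ⁻¹' U)
        ∂(expMeasure 1)
      = ∫⁻ t in Set.Ioi (0:ℝ), (Measure.pi fun _ : Fin n => expMeasure 1) (Prod.mk t ⁻¹' U)
        ∂(expMeasure 1) := by
    rw [← lintegral_add_compl _ measurableSet_Ioi (μ := expMeasure 1), Set.compl_Ioi,
      setLIntegral_measure_zero _ _ expMeasure_Iic_zero, add_zero]
  rw [hsplit, setLIntegral_congr_fun_ae measurableSet_Ioi (ae_of_all _ hslice)]
  have hg : Measurable fun t : ℝ => ENNReal.ofReal (Real.exp (-(C * t))) :=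
    ((measurable_id'.const_mul C).neg.exp).ennreal_ofReal
  rw [expMeasure, gammaMeasure, restrict_withDensity measurableSet_Ioi,
    lintegral_withDensity_eq_lintegral_mul _
      (measurable_gammaPDF 1 1) hg]
  have hpt : ∀ t ∈ Set.Ioi (0:ℝ),
      (gammaPDF 1 1 * fun t => ENNReal.ofReal (Real.exp (-(C * t)))) t
      = ENNReal.ofReal (Real.exp (-(D * t))) := by
    intro t ht
    have h1 : gammaPDF 1 1 t = ENNReal.ofReal (1 * Real.exp (-(1 * t))) :=
      exponentialPDF_of_nonneg (le_of_lt ht)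
    simp only [Pi.mul_apply, h1]
    rw [← ENNReal.ofReal_mul (by positivity)]
    congr 1
    rw [one_mul, ← Real.exp_add]
    congr 1
    rw [hD]; ring
  rw [setLIntegral_congr_fun_ae measurableSet_Ioi (ae_of_all _ hpt)]
  exact lintegral_exp_decay hDpos

lemma joint_law {Ω : Type*} [MeasurableSpace Ω] (μ : Measure Ω) [IsProbabilityMeasure μ]
    {N : ℕ} (S : Fin N → Ω → ℝ) (hSmeas : ∀ i, Measurable (S i))
    (hSindep : iIndepFun S μ) :
    μ.map (fun ω i => S i ω) = Measure.pi (fun i => μ.map (S i)) := by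
  haveI : ∀ i, IsProbabilityMeasure (μ.map (S i)) :=
    fun i => Measure.isProbabilityMeasure_map (hSmeas i).aemeasurable
  refine (Measure.pi_eq fun s hs => ?_).symm
  rw [Measure.map_apply (measurable_pi_lambda _ hSmeas) (MeasurableSet.univ_pi hs)]
  have hpre : (fun ω i => S i ω) ⁻¹' Set.pi Set.univ s = ⋂ i ∈ Finset.univ, S i ⁻¹' s i := by
    ext ω; simp [Set.mem_pi]
  rw [hpre, hSindep.measure_inter_preimage_eq_mul Finset.univ (fun i _ => hs i)]
  exact Finset.prod_congr rfl fun i _ => (Measure.map_apply (hSmeas i) (hs i)).symm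

end Aux

/-- **Exact matching probability for a single proposal (K = 1).**
With `Y = argmin_i S i / q i` and `X = argmin_i S i / p i` computed from the same
i.i.d. `Exp(1)` random variables `S i`, the matching probability is exactly
`Pr[Y = X] = ∑ j, 1 / ∑ i, max (q i / q j) (p i / p j)`; in particular the list
matching lemma's lower bound is tight when `K = 1`. -/
theorem gls_single_proposal_exact_matching
    {Ω : Type*} [MeasurableSpace Ω] (μ : Measure Ω) [IsProbabilityMeasure μ]
    (N : ℕ) (hN : 0 < N)
    (p q : Fin N → ℝ) (hp : ∀ i, 0 < p i) (hq : ∀ i, 0 < q i)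
    (hpsum : ∑ i, p i = 1) (hqsum : ∑ i, q i = 1)
    (S : Fin N → Ω → ℝ) (hSmeas : ∀ i, Measurable (S i))
    (hSindep : iIndepFun S μ)
    (hSexp : ∀ i, μ.map (S i) = expMeasure 1)
    (Y X : Ω → Fin N) (hYmeas : Measurable Y) (hXmeas : Measurable X)
    -- `Y` is a.s. the unique argmin of `i ↦ S i / q i`
    (hY : ∀ᵐ ω ∂μ, ∀ i : Fin N, i ≠ Y ω → S (Y ω) ω / q (Y ω) < S i ω / q i)
    -- `X` is a.s. the unique argmin of `i ↦ S i / p i`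
    (hX : ∀ᵐ ω ∂μ, ∀ i : Fin N, i ≠ X ω → S (X ω) ω / p (X ω) < S i ω / p i) :
    μ {ω | Y ω = X ω}
      = ENNReal.ofReal (∑ j : Fin N, 1 / ∑ i : Fin N, max (q i / q j) (p i / p j)) := by
  rcases Nat.exists_eq_succ_of_ne_zero hN.ne' with ⟨n, rfl⟩
  haveI : IsProbabilityMeasure (expMeasure 1) := isProbabilityMeasure_expMeasure one_pos
  set c : Fin (n + 1) → Fin (n + 1) → ℝ := fun j i => max (q i / q j) (p i / p j) with hc
  have hcpos : ∀ j i, 0 < c j i := fun j i => lt_max_of_lt_left (div_pos (hq i) (hq j))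
  have hcjj : ∀ j, c j j = 1 := fun j => by
    simp [hc, div_self (hq j).ne', div_self (hp j).ne']
  set T : Fin (n + 1) → Set (Fin (n + 1) → ℝ) :=
    fun j => {x | 0 < x j ∧ ∀ i, i ≠ j → c j i * x j < x i} with hTdef
  have hT : ∀ j, MeasurableSet (T j) := by
    intro j
    have h1 : T j = {x : Fin (n + 1) → ℝ | 0 < x j}
        ∩ ⋂ i, {x : Fin (n + 1) → ℝ | i ≠ j → c j i * x j < x i} := by
      ext x; simp [hTdef]
    rw [h1]
    refine ((measurable_pi_apply j) measurableSet_Ioi).inter (MeasurableSet.iInter fun i => ?_)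
    by_cases hij : i = j
    · have h2 : {x : Fin (n + 1) → ℝ | i ≠ j → c j i * x j < x i} = Set.univ := by
        ext x; simp [hij]
      rw [h2]; exact MeasurableSet.univ
    · have h2 : {x : Fin (n + 1) → ℝ | i ≠ j → c j i * x j < x i}
          = {x : Fin (n + 1) → ℝ | c j i * x j < x i} := by
        ext x; simp [hij]
      rw [h2]
      exact measurableSet_lt ((measurable_pi_apply j).const_mul _) (measurable_pi_apply i)
  set A : Fin (n + 1) → Set Ω :=
    fun j => {ω | 0 < S j ω ∧ ∀ i, i ≠ j → c j i * S j ω < S i ω} with hA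
  have hF : Measurable fun ω (i : Fin (n + 1)) => S i ω := measurable_pi_lambda _ hSmeas
  have hApre : ∀ j, A j = (fun ω (i : Fin (n + 1)) => S i ω) ⁻¹' T j := fun j => rfl
  have hAmeas : ∀ j, MeasurableSet (A j) := fun j => (hApre j) ▸ hF (hT j)
  -- a.e. positivity of the S i
  have hpos : ∀ᵐ ω ∂μ, ∀ i, 0 < S i ω := by
    rw [ae_all_iff]
    intro i
    rw [ae_iff]
    have h1 : {ω | ¬ 0 < S i ω} = S i ⁻¹' Set.Iic 0 := by ext ω; simp [not_lt]
    rw [h1, ← Measure.map_apply (hSmeas i) measurableSet_Iic, hSexp i, expMeasure_Iic_zero]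
  -- pointwise key equivalence on the good set
  have hkey : ∀ ω, (∀ i, i ≠ Y ω → S (Y ω) ω / q (Y ω) < S i ω / q i) →
      (∀ i, i ≠ X ω → S (X ω) ω / p (X ω) < S i ω / p i) →
      (∀ i, 0 < S i ω) → (Y ω = X ω ↔ ω ∈ ⋃ j, A j) := by
    intro ω hYω hXω hSω
    constructor
    · intro hYX
      refine Set.mem_iUnion.mpr ⟨Y ω, hSω _, fun i hi => ?_⟩
      have h1 : q i / q (Y ω) * S (Y ω) ω < S i ω := by
        have h := hYω i hi
        rw [div_lt_div_iff₀ (hq _) (hq i)] at h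
        rw [div_mul_eq_mul_div, div_lt_iff₀ (hq (Y ω))]
        nlinarith [h]
      have h2 : p i / p (Y ω) * S (Y ω) ω < S i ω := by
        have hi' : i ≠ X ω := by rw [← hYX]; exact hi
        have h := hXω i hi'
        rw [← hYX] at h
        rw [div_lt_div_iff₀ (hp _) (hp i)] at h
        rw [div_mul_eq_mul_div, div_lt_iff₀ (hp (Y ω))]
        nlinarith [h]
      calc c (Y ω) i * S (Y ω) ω
          = max (q i / q (Y ω) * S (Y ω) ω) (p i / p (Y ω) * S (Y ω) ω) := by
            rw [hc]; exact max_mul_of_nonneg _ _ (hSω _).le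
        _ < S i ω := max_lt h1 h2
    · intro hmem
      obtain ⟨j, hSj, hjlt⟩ := Set.mem_iUnion.mp hmem
      have hYj : Y ω = j := by
        by_contra hne
        have h1 := hYω j (fun h => hne h.symm)
        have h2 := hjlt (Y ω) hne
        have h3 : q (Y ω) / q j * S j ω < S (Y ω) ω :=
          lt_of_le_of_lt (mul_le_mul_of_nonneg_right (le_max_left _ _) hSj.le) h2
        rw [div_mul_eq_mul_div, div_lt_iff₀ (hq j)] at h3
        rw [div_lt_div_iff₀ (hq _) (hq j)] at h1
        nlinarith [h1, h3]
      have hXj : X ω = j := by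
        by_contra hne
        have h1 := hXω j (fun h => hne h.symm)
        have h2 := hjlt (X ω) hne
        have h3 : p (X ω) / p j * S j ω < S (X ω) ω :=
          lt_of_le_of_lt (mul_le_mul_of_nonneg_right (le_max_right _ _) hSj.le) h2
        rw [div_mul_eq_mul_div, div_lt_iff₀ (hp j)] at h3
        rw [div_lt_div_iff₀ (hp _) (hp j)] at h1
        nlinarith [h1, h3]
      rw [hYj, hXj]
  have hae : {ω | Y ω = X ω} =ᵐ[μ] ⋃ j, A j := by
    filter_upwards [hY, hX, hpos] with ω h1 h2 h3
    exact eq_iff_iff.mpr (hkey ω h1 h2 h3)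
  -- disjointness
  have hdisj : Pairwise (Function.onFun Disjoint A) := by
    intro j k hjk
    rw [Function.onFun, Set.disjoint_left]
    rintro ω ⟨hSj, hjlt⟩ ⟨hSk, hklt⟩
    have h1 : q k / q j * S j ω < S k ω :=
      lt_of_le_of_lt (mul_le_mul_of_nonneg_right (le_max_left _ _) hSj.le) (hjlt k (Ne.symm hjk))
    have h2 : q j / q k * S k ω < S j ω :=
      lt_of_le_of_lt (mul_le_mul_of_nonneg_right (le_max_left _ _) hSk.le) (hklt j hjk)
    rw [div_mul_eq_mul_div, div_lt_iff₀ (hq j)] at h1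
    rw [div_mul_eq_mul_div, div_lt_iff₀ (hq k)] at h2
    nlinarith [h1, h2]
  rw [measure_congr hae, measure_iUnion hdisj hAmeas, tsum_fintype]
  have hAj : ∀ j, μ (A j) = ENNReal.ofReal (1 / ∑ i, c j i) := by
    intro j
    rw [hApre j, ← Measure.map_apply hF (hT j), joint_law μ S hSmeas hSindep]
    have he : (fun i : Fin (n + 1) => μ.map (S i)) = fun _ => expMeasure 1 := funext hSexp
    rw [he]
    exact pi_exp_event j (c j) (hcpos j) (hcjj j)
  simp_rw [hAj]
  rw [← ENNReal.ofReal_sum_of_nonneg fun j _ =>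
    one_div_nonneg.mpr (Finset.sum_nonneg fun i _ => (hcpos j i).le)]
end

section
/- Tightness of the list matching bound for degenerate proposal distributions: fix a probability mass function q on {1,…,N} with q_i > 0 for all i, and a positive integer K. The lower-bound expression F(p) = Σ_{j=1}^{N} K / ( Σ_{i=1}^{N} [ max{ q_i/q_j , p_i/p_j } + (K − 1)·q_i/q_j ] ), viewed as a function of a probability mass function p on {1,…,N} with p_i > 0 for all i, converges to q_1 as p tends to the point mass at 1 (that is, as p_2, …, p_N → 0 with p_1 = 1 − Σ_{i≥2} p_i). Since the matching probability equals Pr[Y = 1] = q_1 when the proposal distribution is the point mass at 1, the bound recovers the exact matching probability in this limit. -/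
open Filter Topology

/-- **Tightness of the list matching bound for degenerate proposal distributions.**
Fix a probability mass function `q` on `{1,…,N}` with `q i > 0` and a positive integer
`K`.  The lower-bound expression
`F p = ∑ j, K / ∑ i (max (q i / q j) (p i / p j) + (K-1) * q i / q j)`,
viewed as a function of the probability mass function `p` (with all `p i > 0`),
converges to `q 0` as `p` tends (within the set of strictly positive pmfs) to the
point mass at the first element.  Since the matching probability equals `q 0` for
the point-mass proposal, the bound is exact in this limit. -/
theorem list_matching_bound_tight_degenerate
    (N K : ℕ) (hN : 0 < N) (hK : 0 < K)
    (q : Fin N → ℝ) (hq : ∀ i, 0 < q i) (hqsum : ∑ i, q i = 1) :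
    Tendsto
      (fun p : Fin N → ℝ => ∑ j : Fin N, (K : ℝ) /
        ∑ i : Fin N, (max (q i / q j) (p i / p j) + ((K : ℝ) - 1) * (q i / q j)))
      (𝓝[{p : Fin N → ℝ | (∀ i, 0 < p i) ∧ ∑ i, p i = 1}]
        (fun i : Fin N => if i = ⟨0, hN⟩ then (1 : ℝ) else 0))
      (𝓝 (q ⟨0, hN⟩)) := by
  set i0 : Fin N := ⟨0, hN⟩ with hi0
  set e : Fin N → ℝ := fun i => if i = i0 then (1 : ℝ) else 0 with he
  set s : Set (Fin N → ℝ) := {p | (∀ i, 0 < p i) ∧ ∑ i, p i = 1} with hs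
  have hK1 : (1:ℝ) ≤ (K:ℝ) := by exact_mod_cast hK
  have hKpos : (0:ℝ) < K := by linarith
  have heval : ∀ i : Fin N, Tendsto (fun p : Fin N → ℝ => p i) (𝓝[s] e) (𝓝 (e i)) :=
    fun i => ((continuous_apply i).tendsto e).mono_left nhdsWithin_le_nhds
  have he0 : e i0 = 1 := by simp [he]
  have key : ∀ j : Fin N,
      Tendsto (fun p : Fin N → ℝ => (K : ℝ) /
        ∑ i : Fin N, (max (q i / q j) (p i / p j) + ((K : ℝ) - 1) * (q i / q j)))
        (𝓝[s] e) (𝓝 (if j = i0 then q i0 else 0)) := by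
    intro j
    by_cases hj : j = i0
    · subst hj
      simp only [if_pos rfl]
      have hq0 : 0 < q i0 := hq i0
      have hden : Tendsto (fun p : Fin N → ℝ =>
          ∑ i : Fin N, (max (q i / q i0) (p i / p i0) + ((K : ℝ) - 1) * (q i / q i0)))
          (𝓝[s] e) (𝓝 ((K:ℝ) / q i0)) := by
        have hsum : ∑ i : Fin N, (max (q i / q i0) (e i) + ((K : ℝ) - 1) * (q i / q i0))
            = (K:ℝ) / q i0 := by
          have h1 : ∀ i : Fin N, max (q i / q i0) (e i) + ((K : ℝ) - 1) * (q i / q i0)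
              = (K:ℝ) * q i / q i0 := by
            intro i
            have hmax : max (q i / q i0) (e i) = q i / q i0 := by
              by_cases hi : i = i0
              · rw [hi, he0, div_self hq0.ne', max_self]
              · have hez : e i = 0 := by simp [he, hi]
                rw [hez, max_eq_left (le_of_lt (div_pos (hq i) hq0))]
            rw [hmax]; ring
          rw [Finset.sum_congr rfl (fun i _ => h1 i), ← Finset.sum_div,
            ← Finset.mul_sum, hqsum, mul_one]
        rw [← hsum]
        apply tendsto_finset_sum
        intro i _
        have hdiv : Tendsto (fun p : Fin N → ℝ => p i / p i0) (𝓝[s] e) (𝓝 (e i)) := by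
          have h := (heval i).div (heval i0) (by rw [he0]; norm_num)
          simp only [he0, div_one] at h; exact h
        exact (tendsto_const_nhds.max hdiv).add tendsto_const_nhds
      have hne : (K:ℝ) / q i0 ≠ 0 := by positivity
      have hfin : (K:ℝ) / ((K:ℝ) / q i0) = q i0 := by
        field_simp
      have h := (tendsto_const_nhds (x := (K:ℝ)) (f := 𝓝[s] e)).div hden hne
      rwa [hfin] at h
    · simp only [if_neg hj]
      have hpj : Tendsto (fun p : Fin N → ℝ => p j) (𝓝[s] e) (𝓝[>] 0) := by
        rw [tendsto_nhdsWithin_iff]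
        constructor
        · simpa [he, hj] using heval j
        · filter_upwards [self_mem_nhdsWithin] with p hp
          exact hp.1 j
      have hinv : Tendsto (fun p : Fin N → ℝ => (p j)⁻¹) (𝓝[s] e) atTop :=
        tendsto_inv_nhdsGT_zero.comp hpj
      have hp0 : Tendsto (fun p : Fin N → ℝ => p i0) (𝓝[s] e) (𝓝 1) := by
        simpa [he0] using heval i0
      have hratio : Tendsto (fun p : Fin N → ℝ => p i0 / p j) (𝓝[s] e) atTop := by
        simp only [div_eq_mul_inv]
        exact hp0.pos_mul_atTop one_pos hinv
      have hden : Tendsto (fun p : Fin N → ℝ =>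
          ∑ i : Fin N, (max (q i / q j) (p i / p j) + ((K : ℝ) - 1) * (q i / q j)))
          (𝓝[s] e) atTop := by
        apply tendsto_atTop_mono' _ _ hratio
        filter_upwards [self_mem_nhdsWithin] with p hp
        have hnn : ∀ i ∈ Finset.univ, (0:ℝ) ≤ max (q i / q j) (p i / p j)
            + ((K : ℝ) - 1) * (q i / q j) := by
          intro i _
          have h1 : (0:ℝ) ≤ q i / q j := le_of_lt (div_pos (hq i) (hq j))
          have h2 : (0:ℝ) ≤ ((K:ℝ)-1) * (q i / q j) := mul_nonneg (by linarith) h1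
          have h3 := le_max_left (q i / q j) (p i / p j)
          linarith
        have hterm : p i0 / p j ≤ max (q i0 / q j) (p i0 / p j)
            + ((K : ℝ) - 1) * (q i0 / q j) := by
          have h1 : (0:ℝ) ≤ q i0 / q j := le_of_lt (div_pos (hq i0) (hq j))
          have h2 : (0:ℝ) ≤ ((K:ℝ)-1) * (q i0 / q j) := mul_nonneg (by linarith) h1
          have h3 := le_max_right (q i0 / q j) (p i0 / p j)
          linarith
        exact hterm.trans (Finset.single_le_sum hnn (Finset.mem_univ i0))
      exact tendsto_const_nhds.div_atTop hden
  have h := tendsto_finset_sum Finset.univ (fun j _ => key j)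
  simpa using h
end

section
/- Matching bound for a sublist of proposals (used for the strongly drafter-invariant scheme): under Gumbel-max list sampling with K sets of shared exponential random variables, for any integer J with 1 ≤ J ≤ K, the probability that Y matches one of the first J proposals satisfies Pr[Y ∈ {X^(1), …, X^(J)}] ≥ Σ_{j=1}^{N} J / ( Σ_{i=1}^{N} [ max{ q_i/q_j , p_i/p_j } + (K − 1)·q_i/q_j ] ). (Here Y is still computed as the argmin over all K sets of randomness.) -/
open MeasureTheory ProbabilityTheory

open scoped ENNReal

namespace GLSAux

open Set Finset


lemma expMeasure_apply {s : Set ℝ} (hs : MeasurableSet s) (r : ℝ) :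
    expMeasure r s = ∫⁻ x in s, exponentialPDF r x := by
  rw [expMeasure, gammaMeasure, withDensity_apply _ hs]; rfl

lemma expMeasure_Ioi {r x : ℝ} (hr : 0 < r) (hx : 0 ≤ x) :
    expMeasure r (Set.Ioi x) = ENNReal.ofReal (Real.exp (-(r * x))) := by
  haveI := isProbabilityMeasure_expMeasure hr
  have hIic : expMeasure r (Set.Iic x) = ENNReal.ofReal (1 - Real.exp (-(r * x))) := by
    rw [expMeasure_apply measurableSet_Iic, lintegral_exponentialPDF_eq_antiDeriv hr, if_pos hx]
  have h1 : Set.Ioi x = (Set.Iic x)ᶜ := Set.compl_Iic.symm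
  have he1 : Real.exp (-(r * x)) ≤ 1 := by
    rw [Real.exp_le_one_iff]
    have : 0 ≤ r * x := mul_nonneg hr.le hx
    linarith
  rw [h1, measure_compl measurableSet_Iic (measure_ne_top _ _), hIic, measure_univ,
    ← ENNReal.ofReal_one, ← ENNReal.ofReal_sub _ (by linarith [Real.exp_pos (-(r * x))])]
  congr 1; ring

lemma joint_law {Ω ι : Type*} [MeasurableSpace Ω] [Fintype ι]
    (μ : Measure Ω) [IsProbabilityMeasure μ]
    (f : ι → Ω → ℝ) (hmeas : ∀ i, Measurable (f i))
    (hindep : iIndepFun f μ) :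
    μ.map (fun ω i => f i ω) = Measure.pi (fun i => μ.map (f i)) := by
  haveI : ∀ i, IsProbabilityMeasure (μ.map (f i)) :=
    fun i => Measure.isProbabilityMeasure_map (hmeas i).aemeasurable
  refine (Measure.pi_eq (μ := fun i => μ.map (f i)) fun A hA => ?_).symm
  rw [Measure.map_apply (measurable_pi_lambda _ fun i => hmeas i) (MeasurableSet.univ_pi hA)]
  have hpre : (fun ω i => f i ω) ⁻¹' Set.pi Set.univ A = ⋂ i, f i ⁻¹' A i := by
    ext ω; simp [Set.mem_pi]
  rw [hpre, hindep.meas_iInter fun i => ⟨A i, hA i, rfl⟩]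
  exact Finset.prod_congr rfl fun i _ => (Measure.map_apply (hmeas i) (hA i)).symm

lemma key_bound {Ω ι : Type*} [MeasurableSpace Ω] [Fintype ι] [DecidableEq ι]
    (μ : Measure Ω) [IsProbabilityMeasure μ]
    (f : ι → Ω → ℝ) (hmeas : ∀ m, Measurable (f m))
    (hindep : iIndepFun f μ)
    (hexp : ∀ m, μ.map (f m) = expMeasure 1)
    (m₀ : ι) (r : ι → ℝ) (hr : ∀ m, 0 < r m) :
    ENNReal.ofReal (1 / (1 + ∑ m ∈ Finset.univ.erase m₀, r m))
      ≤ μ {ω | ∀ m, m ≠ m₀ → r m * f m₀ ω < f m ω} := by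
  classical
  haveI : IsProbabilityMeasure (expMeasure (1 : ℝ)) := isProbabilityMeasure_expMeasure one_pos
  set ν := expMeasure (1 : ℝ) with hν
  set R : ℝ := ∑ m ∈ Finset.univ.erase m₀, r m with hRdef
  have hR0 : 0 ≤ R := Finset.sum_nonneg fun m _ => (hr m).le
  have hRpos : (0 : ℝ) < 1 + R := by linarith
  -- measurability of the pi-space event
  have hEmeas : MeasurableSet {x : ι → ℝ | ∀ m, m ≠ m₀ → r m * x m₀ < x m} := by
    have h : {x : ι → ℝ | ∀ m, m ≠ m₀ → r m * x m₀ < x m}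
        = ⋂ m, {x : ι → ℝ | m ≠ m₀ → r m * x m₀ < x m} := by
      ext x; simp [Set.mem_iInter]
    rw [h]
    refine MeasurableSet.iInter fun m => ?_
    by_cases hm : m = m₀
    · have : {x : ι → ℝ | m ≠ m₀ → r m * x m₀ < x m} = Set.univ := by
        ext x; simp [hm]
      rw [this]; exact MeasurableSet.univ
    · have : {x : ι → ℝ | m ≠ m₀ → r m * x m₀ < x m} = {x : ι → ℝ | r m * x m₀ < x m} := by
        ext x; simp [hm]
      rw [this]
      exact measurableSet_lt ((measurable_pi_apply (X := fun _ => ℝ) m₀).const_mul (r m)) (measurable_pi_apply m)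
  -- transfer to the pi measure
  have hmap : μ.map (fun ω m => f m ω) = Measure.pi fun _ : ι => ν := by
    rw [joint_law μ f hmeas hindep]
    exact congrArg Measure.pi (funext fun i => hexp i)
  have hpull : μ {ω | ∀ m, m ≠ m₀ → r m * f m₀ ω < f m ω}
      = (Measure.pi fun _ : ι => ν) {x : ι → ℝ | ∀ m, m ≠ m₀ → r m * x m₀ < x m} := by
    rw [← hmap, Measure.map_apply (measurable_pi_lambda _ fun m => hmeas m) hEmeas]
    rfl
  rw [hpull]
  -- split off coordinate m₀
  set T : Set ((∀ _ : { m : ι // m = m₀ }, ℝ) × (∀ _ : { m : ι // ¬ m = m₀ }, ℝ)) :=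
    {uy | ∀ m : { m : ι // ¬ m = m₀ }, r m.1 * uy.1 ⟨m₀, rfl⟩ < uy.2 m} with hTdef
  have hTmeas : MeasurableSet T := by
    have h : T = ⋂ m : { m : ι // ¬ m = m₀ },
        {uy : (∀ _ : { m : ι // m = m₀ }, ℝ) × (∀ _ : { m : ι // ¬ m = m₀ }, ℝ) |
          r m.1 * uy.1 ⟨m₀, rfl⟩ < uy.2 m} := by
      ext uy; simp [hTdef, Set.mem_iInter]
    rw [h]
    exact MeasurableSet.iInter fun m => measurableSet_lt
      (((measurable_pi_apply (X := fun _ => ℝ) _).comp measurable_fst).const_mul (r m.1))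
      ((measurable_pi_apply m).comp measurable_snd)
  have hmp := measurePreserving_piEquivPiSubtypeProd (fun _ : ι => ν) (fun m => m = m₀)
  have hpre2 : (MeasurableEquiv.piEquivPiSubtypeProd (fun _ : ι => ℝ) (fun m => m = m₀)) ⁻¹' T
      = {x : ι → ℝ | ∀ m, m ≠ m₀ → r m * x m₀ < x m} := by
    ext x
    constructor
    · intro h m hm
      have := h ⟨m, hm⟩
      simpa [MeasurableEquiv.piEquivPiSubtypeProd, Equiv.piEquivPiSubtypeProd] using this
    · intro h m
      have := h m.1 m.2
      simpa [MeasurableEquiv.piEquivPiSubtypeProd, Equiv.piEquivPiSubtypeProd] using this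
  rw [← hpre2, hmp.measure_preimage hTmeas.nullMeasurableSet, Measure.prod_apply hTmeas]
  -- the inner slice
  set G : ℝ → ℝ≥0∞ := fun t => ∏ m : { m : ι // ¬ m = m₀ }, ν (Set.Ioi (r m.1 * t)) with hGdef
  have hGmeas : Measurable G := by
    refine Finset.measurable_prod _ fun m _ => ?_
    have hanti : Antitone fun t : ℝ => ν (Set.Ioi (r m.1 * t)) := by
      intro a b hab
      exact measure_mono (Set.Ioi_subset_Ioi (mul_le_mul_of_nonneg_left hab (hr m.1).le))
    exact hanti.measurable
  have hslice : ∀ u : { m : ι // m = m₀ } → ℝ,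
      (Prod.mk u ⁻¹' T)
        = Set.pi Set.univ fun m : { m : ι // ¬ m = m₀ } => Set.Ioi (r m.1 * u ⟨m₀, rfl⟩) := by
    intro u; ext y; simp [hTdef, Set.mem_pi]
  simp only [hslice, Measure.pi_pi]
  -- integrate out the unique coordinate, then compute the 1-d integral
  refine le_trans (b := ∫⁻ t, G t ∂ν) ?_ (le_of_eq ?_)
  · -- analytic part : ∫⁻ t, G t ∂ν ≥ 1/(1+R)
    have hpdfmeas : Measurable (gammaPDF 1 1) :=
      (measurable_gammaPDFReal 1 1).ennreal_ofReal
    have h4 : ∫⁻ t, G t ∂ν = ∫⁻ t, exponentialPDF 1 t * G t := by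
      rw [hν, expMeasure, gammaMeasure,
        lintegral_withDensity_eq_lintegral_mul _ hpdfmeas hGmeas]
      rfl
    rw [h4]
    have h5 : ∫⁻ t in Set.Ioi (0 : ℝ), exponentialPDF 1 t * G t
        ≤ ∫⁻ t, exponentialPDF 1 t * G t := setLIntegral_le_lintegral _ _
    refine le_trans ?_ h5
    -- pointwise identity on Ioi 0
    have hpoint : ∀ t ∈ Set.Ioi (0 : ℝ), exponentialPDF 1 t * G t
        = ENNReal.ofReal (1 / (1 + R)) * exponentialPDF (1 + R) t := by
      intro t ht
      have ht0 : (0 : ℝ) ≤ t := le_of_lt ht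
      have hsum : ∑ m : { m : ι // ¬ m = m₀ }, r m.1 * t = R * t := by
        rw [hRdef, Finset.sum_mul]
        exact (Finset.sum_subtype (Finset.univ.erase m₀)
          (fun x => by simp [Finset.mem_erase]) (fun m => r m * t)).symm
      have hGt : G t = ENNReal.ofReal (Real.exp (-(R * t))) := by
        rw [hGdef]
        have hfactor : ∀ m : { m : ι // ¬ m = m₀ }, ν (Set.Ioi (r m.1 * t))
            = ENNReal.ofReal (Real.exp (-(r m.1 * t))) := by
          intro m
          have := expMeasure_Ioi (r := 1) one_pos (mul_nonneg (hr m.1).le ht0)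
          rwa [one_mul] at this
        simp only [hfactor]
        rw [← ENNReal.ofReal_prod_of_nonneg fun m _ => (Real.exp_pos _).le, ← Real.exp_sum]
        congr 2
        rw [← hsum, Finset.sum_neg_distrib]
      rw [hGt, exponentialPDF_of_nonneg ht0, exponentialPDF_of_nonneg ht0,
        ← ENNReal.ofReal_mul (by positivity), ← ENNReal.ofReal_mul (by positivity)]
      congr 1
      rw [one_mul, one_mul, ← Real.exp_add, show -t + -(R * t) = -((1 + R) * t) by ring,
        one_div, inv_mul_cancel_left₀ (ne_of_gt hRpos)]
    rw [setLIntegral_congr_fun measurableSet_Ioi hpoint]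
    have hpdfmeas2 : Measurable (exponentialPDF (1 + R)) :=
      (measurable_exponentialPDFReal (1 + R)).ennreal_ofReal
    rw [lintegral_const_mul _ hpdfmeas2]
    -- the remaining integral is 1
    have h6 : ∫⁻ t in Set.Ioi (0 : ℝ), exponentialPDF (1 + R) t = 1 := by
      have htot : ∫⁻ t, exponentialPDF (1 + R) t = 1 := lintegral_exponentialPDF_eq_one hRpos
      have hsplit := lintegral_add_compl (fun t => exponentialPDF (1 + R) t)
        (measurableSet_Iio (a := (0 : ℝ))) (μ := volume)
      rw [Set.compl_Iio] at hsplit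
      have hzero : ∫⁻ t in Set.Iio (0 : ℝ), exponentialPDF (1 + R) t = 0 :=
        lintegral_exponentialPDF_of_nonpos le_rfl
      have hIci : ∫⁻ t in Set.Ici (0 : ℝ), exponentialPDF (1 + R) t = 1 := by
        rw [← htot, ← hsplit, hzero, zero_add]
      rw [← hIci]
      exact setLIntegral_congr Ioi_ae_eq_Ici
    rw [h6, mul_one]
  · -- identify the two integrals
    conv_lhs => rw [← (measurePreserving_funUnique ν { m : ι // m = m₀ }).map_eq]
    rw [lintegral_map hGmeas (MeasurableEquiv.funUnique _ _).measurable]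
    congr!

lemma rate_div_lt {a b c d : ℝ} (hb : 0 < b) (hd : 0 < d) (h : d / b * a < c) :
    a / b < c / d := by
  have hb' : b ≠ 0 := hb.ne'
  have h2 : d / b * a * b = a * d := by field_simp
  have h3 := mul_lt_mul_of_pos_right h hb
  rw [h2] at h3
  rw [div_lt_div_iff₀ hb hd]
  linarith

end GLSAux

open GLSAux

/-- **Matching bound for a sublist of proposals (strongly drafter-invariant scheme).**
Under Gumbel-max list sampling with `K` sets of shared exponentials (and `Y` computed
as the argmin over all `K` sets), for any `1 ≤ J ≤ K`,
`Pr[Y ∈ {X 1, …, X J}] ≥ ∑ j, J / ∑ i (max (q i / q j) (p i / p j) + (K-1) * q i / q j)`. -/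
theorem list_matching_sublist_bound
    {Ω : Type*} [MeasurableSpace Ω] (μ : Measure Ω) [IsProbabilityMeasure μ]
    (N K : ℕ) (hN : 0 < N) (hK : 0 < K)
    (p q : Fin N → ℝ) (hp : ∀ i, 0 < p i) (hq : ∀ i, 0 < q i)
    (hpsum : ∑ i, p i = 1) (hqsum : ∑ i, q i = 1)
    (S : Fin N → Fin K → Ω → ℝ) (hSmeas : ∀ i k, Measurable (S i k))
    (hSindep : iIndepFun
      (fun ik : Fin N × Fin K => S ik.1 ik.2) μ)
    (hSexp : ∀ i k, μ.map (S i k) = expMeasure 1)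
    (Y : Ω → Fin N) (hYmeas : Measurable Y)
    (X : Fin K → Ω → Fin N) (hXmeas : ∀ k, Measurable (X k))
    -- `Y` is a.s. the unique argmin of `i ↦ (min_k S i k) / q i`
    (hY : ∀ᵐ ω ∂μ, ∀ i : Fin N, i ≠ Y ω →
      (⨅ k : Fin K, S (Y ω) k ω) / q (Y ω) < (⨅ k : Fin K, S i k ω) / q i)
    -- each `X k` is a.s. the unique argmin of `i ↦ S i k / p i`
    (hX : ∀ᵐ ω ∂μ, ∀ k : Fin K, ∀ i : Fin N, i ≠ X k ω →
      S (X k ω) k ω / p (X k ω) < S i k ω / p i)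
    (J : ℕ) (hJ1 : 1 ≤ J) (hJK : J ≤ K) :
    ENNReal.ofReal (∑ j : Fin N, (J : ℝ) /
        ∑ i : Fin N, (max (q i / q j) (p i / p j) + ((K : ℝ) - 1) * (q i / q j)))
      ≤ μ {ω | ∃ k : Fin K, (k : ℕ) < J ∧ X k ω = Y ω} := by
  classical
  haveI : Nonempty (Fin N) := Fin.pos_iff_nonempty.mp hN
  haveI : Nonempty (Fin K) := Fin.pos_iff_nonempty.mp hK
  have hK1 : (1 : ℝ) ≤ (K : ℝ) := Nat.one_le_cast.mpr hK
  set D : Fin N → ℝ :=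
    fun j => ∑ i, (max (q i / q j) (p i / p j) + ((K : ℝ) - 1) * (q i / q j)) with hDdef
  have hDpos : ∀ j, 0 < D j := by
    intro j
    refine Finset.sum_pos (fun i _ => ?_) Finset.univ_nonempty
    have h1 : 0 < max (q i / q j) (p i / p j) :=
      lt_of_lt_of_le (div_pos (hq i) (hq j)) (le_max_left _ _)
    have h2 : 0 ≤ ((K : ℝ) - 1) * (q i / q j) :=
      mul_nonneg (by linarith) (div_pos (hq i) (hq j)).le
    linarith
  -- rate functions
  set Rr : Fin N → Fin K → Fin N × Fin K → ℝ := fun j k m =>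
    if m.2 = k then max (q m.1 / q j) (p m.1 / p j) else q m.1 / q j with hRr
  have hRrpos : ∀ j k m, 0 < Rr j k m := by
    intro j k m
    rw [hRr]
    dsimp only
    split_ifs
    · exact lt_of_lt_of_le (div_pos (hq m.1) (hq j)) (le_max_left _ _)
    · exact div_pos (hq m.1) (hq j)
  have hrate_ge : ∀ j k (m : Fin N × Fin K), q m.1 / q j ≤ Rr j k m := by
    intro j k m
    rw [hRr]
    dsimp only
    split_ifs
    · exact le_max_left _ _
    · exact le_rfl
  -- the denominator identity
  have hsum : ∀ j k, 1 + ∑ m ∈ Finset.univ.erase (j, k), Rr j k m = D j := by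
    intro j k
    have hval : Rr j k (j, k) = 1 := by
      rw [hRr]
      simp [div_self (hq j).ne', div_self (hp j).ne']
    have hadd := Finset.add_sum_erase Finset.univ (Rr j k) (Finset.mem_univ (j, k))
    rw [← hval, hadd]
    rw [Fintype.sum_prod_type]
    refine Finset.sum_congr rfl fun i _ => ?_
    rw [← Finset.add_sum_erase Finset.univ (fun k' => Rr j k (i, k')) (Finset.mem_univ k)]
    congr 1
    · rw [hRr]; simp
    · have hc : ∀ k' ∈ Finset.univ.erase k, Rr j k (i, k') = q i / q j := by
        intro k' hk'
        rw [hRr]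
        simp [(Finset.mem_erase.mp hk').1]
      rw [Finset.sum_congr rfl hc, Finset.sum_const, Finset.card_erase_of_mem (Finset.mem_univ k),
        Finset.card_univ, Fintype.card_fin, nsmul_eq_mul, Nat.cast_sub hK, Nat.cast_one]
  -- events
  set E : Fin N → Fin K → Set Ω := fun j k =>
    {ω | ∀ m : Fin N × Fin K, m ≠ (j, k) → Rr j k m * S j k ω < S m.1 m.2 ω} with hE
  have hEbound : ∀ j k, ENNReal.ofReal (1 / D j) ≤ μ (E j k) := by
    intro j k
    have hkb := key_bound μ (fun m : Fin N × Fin K => S m.1 m.2)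
      (fun m => hSmeas m.1 m.2) hSindep (fun m => hSexp m.1 m.2) (j, k) (Rr j k) (hRrpos j k)
    rw [hsum j k] at hkb
    exact hkb
  have hEmeas : ∀ j k, MeasurableSet (E j k) := by
    intro j k
    have h : E j k = ⋂ m : Fin N × Fin K,
        {ω | m ≠ (j, k) → Rr j k m * S j k ω < S m.1 m.2 ω} := by
      ext ω; simp [hE, Set.mem_iInter]
    rw [h]
    refine MeasurableSet.iInter fun m => ?_
    by_cases hm : m = (j, k)
    · have : {ω | m ≠ (j, k) → Rr j k m * S j k ω < S m.1 m.2 ω} = Set.univ := by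
        ext ω; simp [hm]
      rw [this]; exact MeasurableSet.univ
    · have : {ω | m ≠ (j, k) → Rr j k m * S j k ω < S m.1 m.2 ω}
          = {ω | Rr j k m * S j k ω < S m.1 m.2 ω} := by
        ext ω; simp [hm]
      rw [this]
      exact measurableSet_lt ((hSmeas j k).const_mul _) (hSmeas m.1 m.2)
  -- a.e. positivity
  have hpos : ∀ᵐ ω ∂μ, ∀ (i : Fin N) (k : Fin K), 0 < S i k ω := by
    rw [ae_all_iff]
    intro i
    rw [ae_all_iff]
    intro k
    have h0 : μ (S i k ⁻¹' Set.Iic 0) = 0 := by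
      have hm := Measure.map_apply (μ := μ) (hSmeas i k) (measurableSet_Iic (a := (0 : ℝ)))
      rw [hSexp i k] at hm
      rw [← hm, expMeasure_apply measurableSet_Iic,
        lintegral_exponentialPDF_eq_antiDeriv one_pos, if_pos le_rfl]
      simp
    refine ae_iff.mpr ?_
    have h : {ω | ¬ 0 < S i k ω} = S i k ⁻¹' Set.Iic 0 := by
      ext ω; simp [not_lt]
    rw [h]; exact h0
  -- a measurable conull good set
  have hae := hpos.and (hY.and hX)
  obtain ⟨V, hVsub, hVmeas, hVnull⟩ := exists_measurable_superset_of_null (ae_iff.mp hae)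
  set U : Set Ω := Vᶜ with hUdef
  have hUmeas : MeasurableSet U := hVmeas.compl
  have hUc : μ Uᶜ = 0 := by rwa [hUdef, compl_compl]
  have hUgood : ∀ ω ∈ U, (∀ (i : Fin N) (k : Fin K), 0 < S i k ω) ∧
      (∀ i : Fin N, i ≠ Y ω →
        (⨅ k : Fin K, S (Y ω) k ω) / q (Y ω) < (⨅ k : Fin K, S i k ω) / q i) ∧
      (∀ k : Fin K, ∀ i : Fin N, i ≠ X k ω →
        S (X k ω) k ω / p (X k ω) < S i k ω / p i) := by
    intro ω hω
    by_contra hcon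
    exact hω (hVsub hcon)
  -- basic consequence of E membership
  have hEdiv : ∀ (j : Fin N) (k : Fin K) (ω : Ω), 0 < S j k ω → ω ∈ E j k →
      ∀ m : Fin N × Fin K, m ≠ (j, k) → S j k ω / q j < S m.1 m.2 ω / q m.1 := by
    intro j k ω hSp hωE m hm
    refine rate_div_lt (hq j) (hq m.1) ?_
    exact lt_of_le_of_lt (mul_le_mul_of_nonneg_right (hrate_ge j k m) hSp.le) (hωE m hm)
  -- disjointness on U
  have hdisj : ∀ a b : Fin N × Fin K, a ≠ b →
      Disjoint (E a.1 a.2 ∩ U) (E b.1 b.2 ∩ U) := by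
    intro a b hab
    rw [Set.disjoint_left]
    rintro ω ⟨hωa, hωU⟩ ⟨hωb, _⟩
    obtain ⟨hSpos, -, -⟩ := hUgood ω hωU
    have h1 := hEdiv a.1 a.2 ω (hSpos a.1 a.2) hωa b (by simpa using hab.symm)
    have h2 := hEdiv b.1 b.2 ω (hSpos b.1 b.2) hωb a (by simpa using hab)
    linarith
  -- inclusion in the target on U
  have hincl : ∀ (j : Fin N) (k : Fin K), (k : ℕ) < J →
      E j k ∩ U ⊆ {ω | ∃ k : Fin K, (k : ℕ) < J ∧ X k ω = Y ω} := by
    intro j k hkJ ω hω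
    obtain ⟨hωE, hωU⟩ := hω
    obtain ⟨hSpos, hYω, hXω⟩ := hUgood ω hωU
    have hXk : X k ω = j := by
      by_contra hne
      have h1 := hXω k j (fun h => hne h.symm)
      have h2 := hωE (X k ω, k) (by simp [hne])
      have h3 : Rr j k (X k ω, k) = max (q (X k ω) / q j) (p (X k ω) / p j) := by
        rw [hRr]; simp
      rw [h3] at h2
      have h4 : p (X k ω) / p j * S j k ω < S (X k ω) k ω :=
        lt_of_le_of_lt (mul_le_mul_of_nonneg_right (le_max_right _ _) (hSpos j k).le) h2
      have h5 := rate_div_lt (hp j) (hp (X k ω)) h4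
      linarith
    have hYk : Y ω = j := by
      by_contra hne
      have h1 := hYω j (fun h => hne h.symm)
      obtain ⟨kst, hkst⟩ := exists_eq_ciInf_of_finite (f := fun k' => S (Y ω) k' ω)
      have hinf_le : (⨅ k' : Fin K, S j k' ω) ≤ S j k ω :=
        ciInf_le (Set.Finite.bddBelow (Set.finite_range _)) k
      have h2 : S (Y ω) kst ω / q (Y ω) < S j k ω / q j := by
        refine lt_of_lt_of_le ?_ ((div_le_div_iff_of_pos_right (hq j)).mpr hinf_le)
        rw [hkst]
        exact h1
      have h3 := hEdiv j k ω (hSpos j k) hωE (Y ω, kst) (by simp [hne])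
      simp only at h3
      linarith
    exact ⟨k, hkJ, by rw [hXk, hYk]⟩
  -- the index finset
  set F : Finset (Fin K) := Finset.univ.filter (fun k => (k : ℕ) < J) with hF
  have hFcard : F.card = J := by
    have hmap : F = Finset.univ.map ⟨Fin.castLE hJK, Fin.castLE_injective hJK⟩ := by
      ext k
      simp only [hF, Finset.mem_filter, Finset.mem_univ, true_and, Finset.mem_map,
        Function.Embedding.coeFn_mk]
      constructor
      · intro hk; exact ⟨⟨(k : ℕ), hk⟩, by ext; simp⟩
      · rintro ⟨j', rfl⟩; simpa using j'.isLt
    rw [hmap, Finset.card_map, Finset.card_univ, Fintype.card_fin]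
  set P : Finset (Fin N × Fin K) := Finset.univ ×ˢ F with hPdef
  -- put everything together
  have step1 : ENNReal.ofReal (∑ j : Fin N, (J : ℝ) / D j)
      = ∑ j : Fin N, ENNReal.ofReal ((J : ℝ) / D j) :=
    ENNReal.ofReal_sum_of_nonneg fun j _ => div_nonneg (Nat.cast_nonneg J) (hDpos j).le
  have step2 : ∀ j : Fin N, ENNReal.ofReal ((J : ℝ) / D j)
      = ∑ k ∈ F, ENNReal.ofReal (1 / D j) := by
    intro j
    rw [Finset.sum_const, hFcard, nsmul_eq_mul]
    rw [show (J : ℝ) / D j = (J : ℝ) * (1 / D j) by ring,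
      ENNReal.ofReal_mul (Nat.cast_nonneg J), ENNReal.ofReal_natCast]
  have step3 : ∑ j : Fin N, ∑ k ∈ F, ENNReal.ofReal (1 / D j)
      = ∑ m ∈ P, ENNReal.ofReal (1 / D m.1) := by
    rw [hPdef, Finset.sum_product]
  have step4 : ∑ m ∈ P, ENNReal.ofReal (1 / D m.1) ≤ ∑ m ∈ P, μ (E m.1 m.2 ∩ U) := by
    refine Finset.sum_le_sum fun m _ => ?_
    rw [measure_inter_conull hUc]
    exact hEbound m.1 m.2
  have step5 : ∑ m ∈ P, μ (E m.1 m.2 ∩ U) = μ (⋃ m ∈ P, E m.1 m.2 ∩ U) := by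
    refine (measure_biUnion_finset ?_ fun m _ => (hEmeas m.1 m.2).inter hUmeas).symm
    intro a _ b _ hab
    exact hdisj a b hab
  have step6 : μ (⋃ m ∈ P, E m.1 m.2 ∩ U)
      ≤ μ {ω | ∃ k : Fin K, (k : ℕ) < J ∧ X k ω = Y ω} := by
    refine measure_mono ?_
    refine Set.iUnion₂_subset fun m hm => ?_
    refine hincl m.1 m.2 ?_
    have := (Finset.mem_product.mp hm).2
    rw [hF] at this
    exact (Finset.mem_filter.mp this).2
  calc ENNReal.ofReal (∑ j : Fin N, (J : ℝ) / D j)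
      = ∑ j : Fin N, ENNReal.ofReal ((J : ℝ) / D j) := step1
    _ = ∑ j : Fin N, ∑ k ∈ F, ENNReal.ofReal (1 / D j) := Finset.sum_congr rfl fun j _ => step2 j
    _ = ∑ m ∈ P, ENNReal.ofReal (1 / D m.1) := step3
    _ ≤ ∑ m ∈ P, μ (E m.1 m.2 ∩ U) := step4
    _ = μ (⋃ m ∈ P, E m.1 m.2 ∩ U) := step5
    _ ≤ μ {ω | ∃ k : Fin K, (k : ℕ) < J ∧ X k ω = Y ω} := step6
end
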